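/- arXiv:1605.02943 — 6 statements merged into one kernel-verified Lean document; each statement's English description precedes it below -/
import Mathlib

section
/- For every real n > 0 and any two probability measures μ₁, μ₂ on the Borel σ-field of ℝ, there exists a probability measure ν on ℝ such that for all real u, R_{2n}(u; ν) = R_n(u; μ₁) · R_n(u; μ₂). -/
open MeasureTheory ProbabilityTheory Filter Topology Set
open scoped ENNReal NNReal

/-- The modified Stieltjes transform `R_γ(u; μ) = ∫ (1 - i u x)^(-γ) dμ(x)`
(principal branch of the complex power). -/
noncomputable def stieltjesR (γ : ℝ) (μ : Measure ℝ) (u : ℝ) : ℂ :=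
  ∫ x, (1 - (u * x : ℝ) * Complex.I) ^ (-(γ : ℂ)) ∂μ

namespace StieltjesAux

lemma norm_cpow_mul_exp {p : ℝ} {c : ℂ} {t : ℝ} (ht : 0 < t) :
    ‖(t : ℂ) ^ ((p : ℂ) - 1) * Complex.exp (-(c * t))‖
      = t ^ (p - 1) * Real.exp (-(c.re * t)) := by
  rw [norm_mul, Complex.norm_exp,
    Complex.norm_cpow_eq_rpow_re_of_pos ht]
  simp [Complex.mul_re]

lemma integrableOn_rpow_mul_exp {p r : ℝ} (hp : 0 < p) (hr : 0 < r) :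
    IntegrableOn (fun t : ℝ => t ^ (p - 1) * Real.exp (-(r * t))) (Ioi 0) := by
  have h := integrableOn_rpow_mul_exp_neg_mul_rpow (p := 1) (s := p - 1) (b := r)
    (by linarith) one_pos hr
  refine h.congr_fun (fun t _ => ?_) measurableSet_Ioi
  simp only [Real.rpow_one, neg_mul]

lemma contOn_cpow (w : ℂ) : ContinuousOn (fun t : ℝ => (t : ℂ) ^ w) (Ioi 0) := fun t ht =>
  ((continuousAt_cpow_const (Complex.ofReal_mem_slitPlane.2 ht)).comp
    Complex.continuous_ofReal.continuousAt).continuousWithinAt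

lemma aesm_cpow_mul_exp (p : ℝ) (c : ℂ) :
    AEStronglyMeasurable (fun t : ℝ => (t : ℂ) ^ ((p : ℂ) - 1) * Complex.exp (-(c * t)))
      (volume.restrict (Ioi 0)) := by
  apply ContinuousOn.aestronglyMeasurable _ measurableSet_Ioi
  exact (contOn_cpow _).mul
    ((Complex.continuous_exp.comp
      ((continuous_const.mul Complex.continuous_ofReal).neg)).continuousOn)

lemma integrableOn_cpow_mul_exp {p : ℝ} (hp : 0 < p) {c : ℂ} (hc : 0 < c.re) :
    IntegrableOn (fun t : ℝ => (t : ℂ) ^ ((p : ℂ) - 1) * Complex.exp (-(c * t))) (Ioi 0) := by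
  refine (integrableOn_rpow_mul_exp hp hc).mono' (aesm_cpow_mul_exp p c) ?_
  filter_upwards [ae_restrict_mem measurableSet_Ioi] with t ht
  exact (norm_cpow_mul_exp ht).le

lemma integral_cpow_mul_exp {p : ℝ} (hp : 0 < p) {c : ℂ} (hc : 0 < c.re) :
    ∫ t in Ioi (0:ℝ), (t : ℂ) ^ ((p : ℂ) - 1) * Complex.exp (-(c * t))
      = Complex.Gamma p * c ^ (-(p : ℂ)) := by
  have hE : EqOn (fun c : ℂ => ∫ t in Ioi (0:ℝ), (t : ℂ) ^ ((p : ℂ) - 1) * Complex.exp (-(c * t)))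
      (fun c : ℂ => Complex.Gamma p * c ^ (-(p : ℂ))) {z : ℂ | 0 < z.re} := by
    have hUo : IsOpen {z : ℂ | 0 < z.re} := isOpen_lt continuous_const Complex.continuous_re
    refine AnalyticOnNhd.eqOn_of_preconnected_of_frequently_eq ?_ ?_
      (convex_halfSpace_re_gt 0).isPreconnected (show (1:ℂ) ∈ _ by norm_num) ?_
    · refine DifferentiableOn.analyticOnNhd (fun c hc => ?_) hUo
      replace hc : 0 < c.re := hc
      have hbound : ∀ᵐ (t : ℝ) ∂(volume.restrict (Ioi 0)), ∀ x ∈ Metric.ball c (c.re / 2),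
          ‖((t : ℂ) ^ ((p : ℂ) - 1) * Complex.exp (-(x * t))) * (-(t : ℂ))‖
            ≤ t ^ ((p + 1) - 1) * Real.exp (-(c.re / 2 * t)) := by
        filter_upwards [ae_restrict_mem measurableSet_Ioi] with t ht x hx
        rw [mem_Ioi] at ht
        have hxre : c.re / 2 ≤ x.re := by
          have h1 : |(x - c).re| ≤ ‖x - c‖ := Complex.abs_re_le_norm _
          have h2 : ‖x - c‖ < c.re / 2 := by
            rw [← Complex.dist_eq]; exact Metric.mem_ball.mp hx
          have := abs_le.mp (le_of_lt (lt_of_le_of_lt h1 h2))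
          simp only [Complex.sub_re] at this
          linarith [this.1]
        have hnorm : ‖((t : ℂ) ^ ((p : ℂ) - 1) * Complex.exp (-(x * t))) * (-(t : ℂ))‖
            = (t ^ (p - 1) * Real.exp (-(x.re * t))) * t := by
          rw [norm_mul, norm_cpow_mul_exp ht, norm_neg, Complex.norm_real,
            Real.norm_eq_abs, abs_of_pos ht]
        rw [hnorm, show (p + 1) - 1 = (p - 1) + 1 by ring, Real.rpow_add ht, Real.rpow_one]
        have : Real.exp (-(x.re * t)) ≤ Real.exp (-(c.re / 2 * t)) := by
          apply Real.exp_le_exp.2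
          nlinarith [ht.le]
        have hnn : 0 ≤ t ^ (p - 1) * t := by positivity
        calc t ^ (p - 1) * Real.exp (-(x.re * t)) * t
            = t ^ (p - 1) * t * Real.exp (-(x.re * t)) := by ring
          _ ≤ t ^ (p - 1) * t * Real.exp (-(c.re / 2 * t)) :=
              mul_le_mul_of_nonneg_left this hnn
      have hdiff : ∀ᵐ (t : ℝ) ∂(volume.restrict (Ioi 0)), ∀ x ∈ Metric.ball c (c.re / 2),
          HasDerivAt (fun y : ℂ => (t : ℂ) ^ ((p : ℂ) - 1) * Complex.exp (-(y * t)))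
            (((t : ℂ) ^ ((p : ℂ) - 1) * Complex.exp (-(x * t))) * (-(t : ℂ))) x := by
        filter_upwards [ae_restrict_mem measurableSet_Ioi] with t _ x _
        have h0 : HasDerivAt (fun x : ℂ => -(x * (t : ℂ))) (-(t : ℂ)) x := by
          have := ((hasDerivAt_id x).mul_const ((t : ℝ) : ℂ)).neg
          simp only [id, one_mul] at this
          exact this
        have h2 := (h0.cexp).const_mul ((t : ℂ) ^ ((p : ℂ) - 1))
        simpa [mul_assoc] using h2
      obtain ⟨-, hd⟩ := hasDerivAt_integral_of_dominated_loc_of_deriv_le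
        (F := fun (y : ℂ) (t : ℝ) => (t : ℂ) ^ ((p : ℂ) - 1) * Complex.exp (-(y * t)))
        (F' := fun (y : ℂ) (t : ℝ) =>
          ((t : ℂ) ^ ((p : ℂ) - 1) * Complex.exp (-(y * t))) * (-(t : ℂ)))
        (bound := fun t : ℝ => t ^ ((p + 1) - 1) * Real.exp (-(c.re / 2 * t)))
        (μ := volume.restrict (Ioi 0))
        (x₀ := c) (Metric.ball_mem_nhds c (half_pos hc))
        (Eventually.of_forall fun x => aesm_cpow_mul_exp p x)
        (integrableOn_cpow_mul_exp hp hc)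
        ((aesm_cpow_mul_exp p c).mul
          ((Complex.continuous_ofReal.neg).aestronglyMeasurable))
        hbound (integrableOn_rpow_mul_exp (by linarith) (half_pos hc)) hdiff
      exact hd.differentiableAt.differentiableWithinAt
    · refine DifferentiableOn.analyticOnNhd (fun z hz => ?_) hUo
      exact ((differentiableAt_const _).mul
        (differentiableAt_id.cpow (differentiableAt_const _) (Or.inl hz))).differentiableWithinAt
    · have hseq : Tendsto (fun k : ℕ => ((1 + ((k : ℝ) + 1)⁻¹ : ℝ) : ℂ)) atTop (𝓝[≠] (1 : ℂ)) := by
        apply tendsto_nhdsWithin_of_tendsto_nhds_of_eventually_within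
        · have h0 : Tendsto (fun k : ℕ => ((k : ℝ) + 1)⁻¹) atTop (𝓝 0) := by
            simpa only [one_div] using (tendsto_one_div_add_atTop_nhds_zero_nat :
              Tendsto (fun k : ℕ => 1 / ((k : ℝ) + 1)) atTop (𝓝 0))
          have h1 : Tendsto (fun k : ℕ => (1 + ((k : ℝ) + 1)⁻¹ : ℝ)) atTop (𝓝 1) := by
            simpa using tendsto_const_nhds.add h0
          have h2 : Tendsto (fun k : ℕ => ((1 + ((k : ℝ) + 1)⁻¹ : ℝ) : ℂ)) atTop
              (𝓝 ((1 : ℝ) : ℂ)) := (Complex.continuous_ofReal.tendsto _).comp h1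
          simpa using h2
        · refine Eventually.of_forall fun k => ?_
          simp only [mem_compl_iff, mem_singleton_iff]
          intro h
          rw [show (1 : ℂ) = ((1 : ℝ) : ℂ) by norm_num, Complex.ofReal_inj] at h
          have hpos : (0:ℝ) < ((k : ℝ) + 1)⁻¹ := by positivity
          linarith
      refine hseq.frequently (Frequently.of_forall fun k => ?_)
      have hr : (0 : ℝ) < 1 + ((k : ℝ) + 1)⁻¹ := by positivity
      show (∫ t in Ioi (0:ℝ), (t : ℂ) ^ ((p : ℂ) - 1)
          * Complex.exp (-(((1 + ((k : ℝ) + 1)⁻¹ : ℝ) : ℂ) * t)))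
        = Complex.Gamma p * ((1 + ((k : ℝ) + 1)⁻¹ : ℝ) : ℂ) ^ (-(p : ℂ))
      rw [Complex.integral_cpow_mul_exp_neg_mul_Ioi (by simpa using hp) hr]
      rw [one_div, Complex.inv_cpow _ _ (by
        rw [Complex.arg_ofReal_of_nonneg hr.le]; exact Real.pi_ne_zero.symm),
        ← Complex.cpow_neg, mul_comm]
  exact hE hc

lemma ofReal_mul_cpow {r : ℝ} (hr : 0 < r) (z w : ℂ) :
    ((r : ℂ) * z) ^ w = (r : ℂ) ^ w * z ^ w := by
  rcases eq_or_ne z 0 with rfl | hz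
  · rcases eq_or_ne w 0 with rfl | hw
    · simp
    · simp [Complex.zero_cpow hw]
  · have hr0 : (r : ℂ) ≠ 0 := Complex.ofReal_ne_zero.2 hr.ne'
    rw [Complex.cpow_def_of_ne_zero (mul_ne_zero hr0 hz),
      Complex.log_ofReal_mul hr hz, add_mul, Complex.exp_add,
      Complex.cpow_def_of_ne_zero hr0, Complex.cpow_def_of_ne_zero hz,
      Complex.ofReal_log hr.le]

lemma key_integral {n : ℝ} (hn : 0 < n) {A B : ℂ} (hA : 0 < A.re) (hB : 0 < B.re) :
    ∫ v in Ioi (0:ℝ), (v : ℂ) ^ ((n : ℂ) - 1) * (A + B * (v : ℂ)) ^ (-((2 * n : ℝ) : ℂ))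
      = (Complex.Gamma n * A ^ (-(n : ℂ))) * (Complex.Gamma n * B ^ (-(n : ℂ)))
        / Complex.Gamma ((2 * n : ℝ) : ℂ) := by
  have h2n : (0:ℝ) < 2 * n := by linarith
  have hG2 : Complex.Gamma ((2 * n : ℝ) : ℂ) ≠ 0 := by
    rw [Complex.Gamma_ofReal]
    exact_mod_cast (Real.Gamma_pos_of_pos h2n).ne'
  have hre : ∀ v : ℝ, 0 ≤ v → 0 < (A + B * (v : ℂ)).re := by
    intro v hv
    have : (A + B * (v : ℂ)).re = A.re + B.re * v := by simp [Complex.mul_re]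
    rw [this]; positivity
  have hsplit : ∀ s v : ℝ, Complex.exp (-((A + B * (v : ℂ)) * s))
      = Complex.exp (-(A * s)) * Complex.exp (-((B * s) * v)) := by
    intro s v
    rw [← Complex.exp_add]
    congr 1
    ring
  -- measurability of the two-variable integrand (s,v) ↦ H s v
  have hmeas : AEStronglyMeasurable
      (fun q : ℝ × ℝ => (q.2 : ℂ) ^ ((n : ℂ) - 1) *
        ((q.1 : ℂ) ^ (((2 * n : ℝ) : ℂ) - 1) * Complex.exp (-((A + B * (q.2 : ℂ)) * q.1))))
      ((volume.restrict (Ioi 0)).prod (volume.restrict (Ioi 0))) := by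
    rw [Measure.prod_restrict]
    apply ContinuousOn.aestronglyMeasurable _ (measurableSet_Ioi.prod measurableSet_Ioi)
    intro q hq
    apply ContinuousAt.continuousWithinAt
    have h1' : ContinuousAt (fun z : ℝ => (z : ℂ) ^ ((n : ℂ) - 1)) q.2 :=
      (continuousAt_cpow_const (Complex.ofReal_mem_slitPlane.2 hq.2)).comp
        Complex.continuous_ofReal.continuousAt
    have h2' : ContinuousAt (fun z : ℝ => (z : ℂ) ^ (((2 * n : ℝ) : ℂ) - 1)) q.1 :=
      (continuousAt_cpow_const (Complex.ofReal_mem_slitPlane.2 hq.1)).comp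
        Complex.continuous_ofReal.continuousAt
    have h1 : ContinuousAt (fun q : ℝ × ℝ => ((q.2 : ℂ)) ^ ((n : ℂ) - 1)) q :=
      h1'.comp continuous_snd.continuousAt
    have h2 : ContinuousAt (fun q : ℝ × ℝ => ((q.1 : ℂ)) ^ (((2 * n : ℝ) : ℂ) - 1)) q :=
      h2'.comp continuous_fst.continuousAt
    have h3 : Continuous (fun q : ℝ × ℝ => Complex.exp (-((A + B * (q.2 : ℂ)) * q.1))) :=
      Complex.continuous_exp.comp
        (((continuous_const.add (continuous_const.mul
          (Complex.continuous_ofReal.comp continuous_snd))).mul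
          (Complex.continuous_ofReal.comp continuous_fst)).neg)
    exact h1.mul (h2.mul h3.continuousAt)
  -- integrability on the product
  have hInt : Integrable
      (fun q : ℝ × ℝ => (q.2 : ℂ) ^ ((n : ℂ) - 1) *
        ((q.1 : ℂ) ^ (((2 * n : ℝ) : ℂ) - 1) * Complex.exp (-((A + B * (q.2 : ℂ)) * q.1))))
      ((volume.restrict (Ioi 0)).prod (volume.restrict (Ioi 0))) := by
    refine (integrable_prod_iff hmeas).2 ⟨?_, ?_⟩
    · filter_upwards [ae_restrict_mem measurableSet_Ioi] with s hs
      rw [mem_Ioi] at hs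
      have hBs : 0 < (B * (s : ℂ)).re := by
        have : (B * (s : ℂ)).re = B.re * s := by simp [Complex.mul_re]
        rw [this]; positivity
      have base := (integrableOn_cpow_mul_exp hn hBs).const_mul
        ((s : ℂ) ^ (((2 * n : ℝ) : ℂ) - 1) * Complex.exp (-(A * s)))
      refine base.congr (Eventually.of_forall fun v => ?_)
      dsimp only
      rw [hsplit s v]
      ring
    · -- integrability of s ↦ ∫ v ‖H s v‖
      have hval : ∀ s ∈ Ioi (0:ℝ),
          (∫ (v : ℝ), ‖(v : ℂ) ^ ((n : ℂ) - 1) *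
            ((s : ℂ) ^ (((2 * n : ℝ) : ℂ) - 1) * Complex.exp (-((A + B * (v : ℂ)) * s)))‖
            ∂(volume.restrict (Ioi 0)))
          = ((1 / B.re) ^ n * Real.Gamma n) * (s ^ (n - 1) * Real.exp (-(A.re * s))) := by
        intro s hs
        rw [mem_Ioi] at hs
        have e1 : ∫ (v : ℝ), ‖(v : ℂ) ^ ((n : ℂ) - 1) *
            ((s : ℂ) ^ (((2 * n : ℝ) : ℂ) - 1) * Complex.exp (-((A + B * (v : ℂ)) * s)))‖
            ∂(volume.restrict (Ioi 0))
            = ∫ v in Ioi (0:ℝ), (s ^ (2 * n - 1) * Real.exp (-(A.re * s))) *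
                (v ^ (n - 1) * Real.exp (-((B.re * s) * v))) := by
          refine setIntegral_congr_fun measurableSet_Ioi (fun v hv => ?_)
          rw [mem_Ioi] at hv
          rw [hsplit s v, norm_mul, norm_mul, norm_mul]
          rw [Complex.norm_cpow_eq_rpow_re_of_pos hv]
          rw [Complex.norm_cpow_eq_rpow_re_of_pos hs]
          rw [Complex.norm_exp, Complex.norm_exp]
          have r1 : ((n : ℂ) - 1).re = n - 1 := by simp
          have r2 : ((((2 * n : ℝ)) : ℂ) - 1).re = 2 * n - 1 := by simp
          have r3 : (-(A * (s:ℂ))).re = -(A.re * s) := by simp [Complex.mul_re]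
          have r4 : (-((B * (s:ℂ)) * (v:ℂ))).re = -((B.re * s) * v) := by
            simp [Complex.mul_re]
          rw [r1, r2, r3, r4]
          ring
        rw [e1, integral_const_mul _, Real.integral_rpow_mul_exp_neg_mul_Ioi hn
          (by positivity : 0 < B.re * s)]
        have e2 : (1 / (B.re * s)) ^ n = (1 / B.re) ^ n * s ^ (-n) := by
          rw [one_div, mul_inv, Real.mul_rpow (by positivity) (by positivity),
            Real.inv_rpow hs.le, ← Real.rpow_neg hs.le, one_div]
        have e3 : s ^ (2 * n - 1) * s ^ (-n) = s ^ (n - 1) := by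
          rw [← Real.rpow_add hs]
          ring_nf
        rw [e2, ← e3]
        ring
      have target := (integrableOn_rpow_mul_exp hn hA).const_mul
        ((1 / B.re) ^ n * Real.Gamma n)
      refine target.congr ?_
      filter_upwards [ae_restrict_mem measurableSet_Ioi] with s hs
      exact (hval s hs).symm
  -- the main computation
  have hG2' : ∀ v : ℝ, 0 < v → (A + B * (v:ℂ)) ^ (-((2 * n : ℝ) : ℂ))
      = (Complex.Gamma ((2 * n : ℝ) : ℂ))⁻¹ *
        ∫ s in Ioi (0:ℝ), (s : ℂ) ^ (((2 * n : ℝ) : ℂ) - 1)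
          * Complex.exp (-((A + B * (v:ℂ)) * s)) := by
    intro v hv
    rw [integral_cpow_mul_exp h2n (hre v hv.le)]
    rw [← mul_assoc, inv_mul_cancel₀ hG2, one_mul]
  calc ∫ v in Ioi (0:ℝ), (v : ℂ) ^ ((n : ℂ) - 1) * (A + B * (v : ℂ)) ^ (-((2 * n : ℝ) : ℂ))
      = ∫ v in Ioi (0:ℝ), (Complex.Gamma ((2 * n : ℝ) : ℂ))⁻¹ *
          ∫ s in Ioi (0:ℝ), (v : ℂ) ^ ((n : ℂ) - 1) *
            ((s : ℂ) ^ (((2 * n : ℝ) : ℂ) - 1) * Complex.exp (-((A + B * (v:ℂ)) * s))) := by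
        refine setIntegral_congr_fun measurableSet_Ioi (fun v hv => ?_)
        rw [mem_Ioi] at hv
        rw [hG2' v hv, integral_const_mul _]
        ring
    _ = (Complex.Gamma ((2 * n : ℝ) : ℂ))⁻¹ *
          ∫ s in Ioi (0:ℝ), ∫ v in Ioi (0:ℝ), (v : ℂ) ^ ((n : ℂ) - 1) *
            ((s : ℂ) ^ (((2 * n : ℝ) : ℂ) - 1) * Complex.exp (-((A + B * (v:ℂ)) * s))) := by
        rw [integral_const_mul _]
        congr 1
        exact integral_integral_swap (by exact hInt.swap)
    _ = (Complex.Gamma ((2 * n : ℝ) : ℂ))⁻¹ *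
          ∫ s in Ioi (0:ℝ), ((s : ℂ) ^ (((2 * n : ℝ) : ℂ) - 1) * Complex.exp (-(A * s))) *
            (Complex.Gamma n * (B * (s:ℂ)) ^ (-(n : ℂ))) := by
        congr 1
        refine setIntegral_congr_fun measurableSet_Ioi (fun s hs => ?_)
        rw [mem_Ioi] at hs
        have hBs : 0 < (B * (s : ℂ)).re := by
          have : (B * (s : ℂ)).re = B.re * s := by simp [Complex.mul_re]
          rw [this]; positivity
        have e4 : (∫ v in Ioi (0:ℝ), (v : ℂ) ^ ((n : ℂ) - 1) *
            ((s : ℂ) ^ (((2 * n : ℝ) : ℂ) - 1) * Complex.exp (-((A + B * (v:ℂ)) * s))))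
            = ((s : ℂ) ^ (((2 * n : ℝ) : ℂ) - 1) * Complex.exp (-(A * s))) *
              ∫ v in Ioi (0:ℝ), (v : ℂ) ^ ((n : ℂ) - 1) * Complex.exp (-((B * (s:ℂ)) * v)) := by
          rw [← integral_const_mul ((s : ℂ) ^ (((2 * n : ℝ) : ℂ) - 1) * Complex.exp (-(A * s)))]
          refine setIntegral_congr_fun measurableSet_Ioi (fun v _ => ?_)
          rw [hsplit s v]
          ring
        rw [e4, integral_cpow_mul_exp hn hBs]
    _ = (Complex.Gamma ((2 * n : ℝ) : ℂ))⁻¹ * (Complex.Gamma n * B ^ (-(n : ℂ))) *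
          ∫ s in Ioi (0:ℝ), (s : ℂ) ^ ((n : ℂ) - 1) * Complex.exp (-(A * s)) := by
        rw [mul_assoc, ← integral_const_mul (Complex.Gamma (n:ℂ) * B ^ (-(n:ℂ)))]
        congr 1
        refine setIntegral_congr_fun measurableSet_Ioi (fun s hs => ?_)
        rw [mem_Ioi] at hs
        have hs0 : (s : ℂ) ≠ 0 := Complex.ofReal_ne_zero.2 hs.ne'
        rw [show B * (s:ℂ) = (s:ℂ) * B by ring, ofReal_mul_cpow hs B (-(n:ℂ))]
        have e5 : (s : ℂ) ^ (((2 * n : ℝ) : ℂ) - 1) * (s : ℂ) ^ (-(n : ℂ))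
            = (s : ℂ) ^ ((n : ℂ) - 1) := by
          rw [← Complex.cpow_add _ _ hs0]
          congr 1
          push_cast
          ring
        calc (s : ℂ) ^ (((2 * n : ℝ) : ℂ) - 1) * Complex.exp (-(A * s)) *
              (Complex.Gamma n * ((s:ℂ) ^ (-(n:ℂ)) * B ^ (-(n:ℂ))))
            = (Complex.Gamma n * B ^ (-(n:ℂ))) *
              (((s : ℂ) ^ (((2 * n : ℝ) : ℂ) - 1) * (s : ℂ) ^ (-(n : ℂ))) *
                Complex.exp (-(A * s))) := by ring
          _ = Complex.Gamma n * B ^ (-(n:ℂ)) *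
              ((s : ℂ) ^ ((n : ℂ) - 1) * Complex.exp (-(A * s))) := by rw [e5]
    _ = (Complex.Gamma n * A ^ (-(n : ℂ))) * (Complex.Gamma n * B ^ (-(n : ℂ)))
        / Complex.Gamma ((2 * n : ℝ) : ℂ) := by
        rw [integral_cpow_mul_exp hn hA]
        field_simp

lemma contOn_w {n : ℝ} (s : Set ℝ) (hs : ∀ v ∈ s, 0 < v) :
    ContinuousOn (fun v : ℝ => v ^ (n - 1) * (1 + v) ^ (-(2 * n))) s := by
  intro v hv
  have hv' := hs v hv
  apply ContinuousAt.continuousWithinAt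
  exact (Real.continuousAt_rpow_const v (n-1) (Or.inl hv'.ne')).mul
    ((Real.continuousAt_rpow_const (1+v) (-(2*n)) (Or.inl (by positivity))).comp
      (continuous_const.add continuous_id).continuousAt)

lemma integrableOn_w {n : ℝ} (hn : 0 < n) :
    IntegrableOn (fun v : ℝ => v ^ (n - 1) * (1 + v) ^ (-(2 * n))) (Ioi 0) := by
  have hIoc : IntegrableOn (fun v : ℝ => v ^ (n - 1) * (1 + v) ^ (-(2 * n))) (Ioc 0 1) := by
    have h1 : IntegrableOn (fun v : ℝ => v ^ (n - 1)) (Ioc (0:ℝ) 1) := by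
      have := intervalIntegral.intervalIntegrable_rpow' (r := n - 1) (a := 0) (b := 1) (by linarith)
      rwa [intervalIntegrable_iff_integrableOn_Ioc_of_le zero_le_one] at this
    refine h1.mono' ((contOn_w _ (fun v hv => hv.1)).aestronglyMeasurable measurableSet_Ioc) ?_
    filter_upwards [ae_restrict_mem measurableSet_Ioc] with v hv
    have h2 : (1 + v) ^ (-(2 * n)) ≤ 1 :=
      Real.rpow_le_one_of_one_le_of_nonpos (by linarith [hv.1]) (by linarith)
    have h3 : (0:ℝ) ≤ v ^ (n - 1) := Real.rpow_nonneg hv.1.le _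
    rw [Real.norm_eq_abs, abs_of_nonneg (mul_nonneg h3 (Real.rpow_nonneg (by linarith [hv.1]) _))]
    calc v ^ (n-1) * (1+v) ^ (-(2*n)) ≤ v ^ (n-1) * 1 := by
          exact mul_le_mul_of_nonneg_left h2 h3
      _ = v ^ (n-1) := mul_one _
  have hIoi : IntegrableOn (fun v : ℝ => v ^ (n - 1) * (1 + v) ^ (-(2 * n))) (Ioi 1) := by
    have h1 : IntegrableOn (fun v : ℝ => v ^ (-n - 1)) (Ioi (1:ℝ)) :=
      integrableOn_Ioi_rpow_of_lt (by linarith) one_pos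
    refine h1.mono' ((contOn_w _ (fun v hv => by
      rw [mem_Ioi] at hv; linarith)).aestronglyMeasurable measurableSet_Ioi) ?_
    filter_upwards [ae_restrict_mem measurableSet_Ioi] with v hv
    rw [mem_Ioi] at hv
    have hv0 : (0:ℝ) < v := by linarith
    have h2 : (1 + v) ^ (-(2 * n)) ≤ v ^ (-(2 * n)) :=
      Real.rpow_le_rpow_of_nonpos hv0 (by linarith) (by linarith)
    have h3 : (0:ℝ) ≤ v ^ (n - 1) := Real.rpow_nonneg hv0.le _
    rw [Real.norm_eq_abs, abs_of_nonneg (mul_nonneg h3 (Real.rpow_nonneg (by linarith) _))]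
    calc v ^ (n-1) * (1+v) ^ (-(2*n)) ≤ v ^ (n-1) * v ^ (-(2*n)) :=
          mul_le_mul_of_nonneg_left h2 h3
      _ = v ^ (-n - 1) := by rw [← Real.rpow_add hv0]; ring_nf
  have := hIoc.union hIoi
  rwa [Ioc_union_Ioi_eq_Ioi zero_le_one] at this

lemma beta_value {n : ℝ} (hn : 0 < n) :
    ∫ v in Ioi (0:ℝ), v ^ (n - 1) * (1 + v) ^ (-(2 * n))
      = Real.Gamma n * Real.Gamma n / Real.Gamma (2 * n) := by
  rw [← Complex.ofReal_inj]
  have h1 : ((∫ v in Ioi (0:ℝ), v ^ (n - 1) * (1 + v) ^ (-(2 * n)) : ℝ) : ℂ)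
      = ∫ v in Ioi (0:ℝ), ((v ^ (n - 1) * (1 + v) ^ (-(2 * n)) : ℝ) : ℂ) :=
    integral_ofReal.symm
  have h2 : (∫ v in Ioi (0:ℝ), ((v ^ (n - 1) * (1 + v) ^ (-(2 * n)) : ℝ) : ℂ))
      = ∫ v in Ioi (0:ℝ), (v : ℂ) ^ ((n : ℂ) - 1) * ((1:ℂ) + 1 * (v : ℂ)) ^ (-((2 * n : ℝ) : ℂ)) := by
    refine setIntegral_congr_fun measurableSet_Ioi (fun v hv => ?_)
    rw [mem_Ioi] at hv
    rw [Complex.ofReal_mul, Complex.ofReal_cpow hv.le, Complex.ofReal_cpow (by linarith : (0:ℝ) ≤ 1 + v)]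
    push_cast
    ring
  rw [h1, h2, key_integral hn (A := 1) (B := 1) (by norm_num) (by norm_num)]
  rw [Complex.one_cpow, Complex.Gamma_ofReal, Complex.Gamma_ofReal]
  push_cast
  ring

lemma norm_g_le_one {γ : ℝ} (hγ : 0 ≤ γ) (r : ℝ) :
    ‖((1:ℂ) - (r : ℂ) * Complex.I) ^ (-(γ : ℂ))‖ ≤ 1 := by
  have hz : ((1:ℂ) - (r:ℂ) * Complex.I) ≠ 0 := by
    intro h
    have := congrArg Complex.re h
    simp [Complex.sub_re, Complex.mul_re] at this
  rw [Complex.norm_cpow_of_ne_zero hz]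
  have him : (-(γ:ℂ)).im = 0 := by simp
  have hre : (-(γ:ℂ)).re = -γ := by simp
  rw [him, hre, mul_zero, Real.exp_zero, div_one]
  apply Real.rpow_le_one_of_one_le_of_nonpos ?_ (by linarith)
  have h1 : |((1:ℂ) - (r:ℂ) * Complex.I).re| ≤ ‖(1:ℂ) - (r:ℂ) * Complex.I‖ :=
    Complex.abs_re_le_norm _
  have h2 : ((1:ℂ) - (r:ℂ) * Complex.I).re = 1 := by simp [Complex.sub_re, Complex.mul_re]
  rw [h2] at h1
  simpa using h1

lemma re_base (r : ℝ) : ((1:ℂ) - (r : ℂ) * Complex.I).re = 1 := by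
  simp [Complex.sub_re, Complex.mul_re]

lemma cont_g (γ : ℝ) (u : ℝ) :
    Continuous (fun z : ℝ => ((1:ℂ) - ((u * z : ℝ) : ℂ) * Complex.I) ^ (-(γ : ℂ))) := by
  rw [continuous_iff_continuousAt]
  intro z
  have hb : Continuous (fun z : ℝ => (1:ℂ) - ((u * z : ℝ) : ℂ) * Complex.I) := by
    apply continuous_const.sub
    exact (Complex.continuous_ofReal.comp (continuous_const.mul continuous_id)).mul
      continuous_const
  exact (continuousAt_cpow_const (by rw [Complex.mem_slitPlane_iff, re_base]; left; norm_num)).comp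
    hb.continuousAt

lemma base_eq {x y v u : ℝ} (hv : 0 < v) :
    (1:ℂ) - ((u * ((x + v * y) / (1 + v)) : ℝ) : ℂ) * Complex.I
      = (((1:ℂ) - ((u * x : ℝ) : ℂ) * Complex.I)
          + ((1:ℂ) - ((u * y : ℝ) : ℂ) * Complex.I) * (v : ℂ)) / ((1 + v : ℝ) : ℂ) := by
  have h1v : (1 + v : ℝ) ≠ 0 := by positivity
  have h1vc : ((1 + v : ℝ) : ℂ) ≠ 0 := Complex.ofReal_ne_zero.2 h1v
  have h1vc' : (1:ℂ) + (v:ℂ) ≠ 0 := by exact_mod_cast h1vc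
  rw [eq_div_iff h1vc]
  push_cast
  field_simp [h1vc']
  ring

lemma density_point_eq {n u Bc x y : ℝ} {v : ℝ} (hv : 0 < v) (hBc : 0 < Bc) :
    (Real.toNNReal ((v ^ (n - 1) * (1 + v) ^ (-(2 * n))) / Bc))
        • ((1:ℂ) - ((u * ((x + v * y) / (1 + v)) : ℝ) : ℂ) * Complex.I) ^ (-((2 * n : ℝ) : ℂ))
      = ((v : ℂ) ^ ((n : ℂ) - 1) *
          ((((1:ℂ) - ((u * x : ℝ) : ℂ) * Complex.I))
            + (((1:ℂ) - ((u * y : ℝ) : ℂ) * Complex.I)) * (v : ℂ)) ^ (-((2 * n : ℝ) : ℂ)))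
        / (Bc : ℂ) := by
  have h1v : (0:ℝ) < 1 + v := by linarith
  have h1vc : ((1 + v : ℝ) : ℂ) ≠ 0 := Complex.ofReal_ne_zero.2 (by positivity)
  have hwnn : 0 ≤ (v ^ (n - 1) * (1 + v) ^ (-(2 * n))) / Bc :=
    div_nonneg (mul_nonneg (Real.rpow_nonneg hv.le _) (Real.rpow_nonneg h1v.le _)) hBc.le
  rw [NNReal.smul_def, Real.coe_toNNReal _ hwnn, Complex.real_smul, base_eq hv]
  have hdiv : (((((1:ℂ) - ((u * x : ℝ) : ℂ) * Complex.I))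
            + (((1:ℂ) - ((u * y : ℝ) : ℂ) * Complex.I)) * (v : ℂ)) / ((1 + v : ℝ) : ℂ))
          ^ (-((2 * n : ℝ) : ℂ))
      = ((1 + v : ℝ) : ℂ) ^ ((2 * n : ℝ) : ℂ) *
        ((((1:ℂ) - ((u * x : ℝ) : ℂ) * Complex.I))
            + (((1:ℂ) - ((u * y : ℝ) : ℂ) * Complex.I)) * (v : ℂ)) ^ (-((2 * n : ℝ) : ℂ)) := by
    rw [div_eq_mul_inv, mul_comm, ← Complex.ofReal_inv,
      ofReal_mul_cpow (inv_pos.2 h1v) _ _, Complex.ofReal_inv,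
      Complex.inv_cpow _ _ (by
        rw [Complex.arg_ofReal_of_nonneg h1v.le]; exact Real.pi_ne_zero.symm),
      ← Complex.cpow_neg, neg_neg]
  rw [hdiv]
  have hcoe : ((v ^ (n - 1) * (1 + v) ^ (-(2 * n)) / Bc : ℝ) : ℂ)
      = ((v : ℂ) ^ ((n : ℂ) - 1) * (((1 + v : ℝ) : ℂ) ^ ((2 * n : ℝ) : ℂ))⁻¹) / (Bc : ℂ) := by
    rw [Complex.ofReal_div, Complex.ofReal_mul, Complex.ofReal_cpow hv.le,
      Complex.ofReal_cpow h1v.le, Complex.ofReal_neg, Complex.cpow_neg]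
    norm_num
  rw [hcoe]
  have hcne : ((1 + v : ℝ) : ℂ) ^ ((2 * n : ℝ) : ℂ) ≠ 0 := by
    rw [Complex.cpow_def_of_ne_zero h1vc]
    exact Complex.exp_ne_zero _
  generalize (((1:ℂ) - ((u * x : ℝ) : ℂ) * Complex.I)
            + (((1:ℂ) - ((u * y : ℝ) : ℂ) * Complex.I)) * (v : ℂ)) ^ (-((2 * n : ℝ) : ℂ)) = Z
  generalize hC : ((1 + v : ℝ) : ℂ) ^ ((2 * n : ℝ) : ℂ) = Cc at hcne ⊢
  rw [show (v:ℂ) ^ ((n:ℂ) - 1) * Cc⁻¹ / (Bc:ℂ) * (Cc * Z)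
      = ((v:ℂ) ^ ((n:ℂ) - 1) * Z / (Bc:ℂ)) * (Cc⁻¹ * Cc) from by ring,
    inv_mul_cancel₀ hcne, mul_one]

end StieltjesAux

open StieltjesAux

/-- For every real `n > 0` and probability measures `μ₁, μ₂` on ℝ there is a probability
measure `ν` with `R_{2n}(u; ν) = R_n(u; μ₁) · R_n(u; μ₂)` for all real `u`. -/
theorem exists_nTwoN_convolution (n : ℝ) (hn : 0 < n)
    (μ₁ μ₂ : Measure ℝ) [IsProbabilityMeasure μ₁] [IsProbabilityMeasure μ₂] :
    ∃ ν : Measure ℝ, IsProbabilityMeasure ν ∧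
      ∀ u : ℝ, stieltjesR (2 * n) ν u = stieltjesR n μ₁ u * stieltjesR n μ₂ u := by
  have h2n : (0:ℝ) < 2 * n := by linarith
  have hΓn : 0 < Real.Gamma n := Real.Gamma_pos_of_pos hn
  have hΓ2n : 0 < Real.Gamma (2 * n) := Real.Gamma_pos_of_pos h2n
  set Bc := Real.Gamma n * Real.Gamma n / Real.Gamma (2 * n) with hBcdef
  have hBc : 0 < Bc := by rw [hBcdef]; positivity
  have hwint : IntegrableOn (fun v : ℝ => v ^ (n - 1) * (1 + v) ^ (-(2 * n))) (Ioi 0) :=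
    integrableOn_w hn
  have hdmeas : AEMeasurable
      (fun v : ℝ => Real.toNNReal ((v ^ (n - 1) * (1 + v) ^ (-(2 * n))) / Bc))
      (volume.restrict (Ioi 0)) :=
    measurable_real_toNNReal.comp_aemeasurable ((hwint.1.aemeasurable).div_const Bc)
  set ρ : Measure ℝ := (volume.restrict (Ioi 0)).withDensity
    (fun v => ((Real.toNNReal ((v ^ (n - 1) * (1 + v) ^ (-(2 * n))) / Bc)) : ℝ≥0∞)) with hρdef
  have hρuniv : ρ univ = 1 := by
    rw [hρdef, withDensity_apply _ MeasurableSet.univ, Measure.restrict_univ]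
    have h1 : ∫⁻ v, ((Real.toNNReal ((v ^ (n - 1) * (1 + v) ^ (-(2 * n))) / Bc)) : ℝ≥0∞)
        ∂(volume.restrict (Ioi 0))
        = ENNReal.ofReal (∫ v, (v ^ (n - 1) * (1 + v) ^ (-(2 * n))) / Bc
            ∂(volume.restrict (Ioi 0))) := by
      rw [ofReal_integral_eq_lintegral_ofReal (hwint.div_const Bc) ?_]
      · rfl
      · filter_upwards [ae_restrict_mem measurableSet_Ioi] with v hv
        rw [mem_Ioi] at hv
        exact div_nonneg (mul_nonneg (Real.rpow_nonneg hv.le _)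
          (Real.rpow_nonneg (by linarith) _)) hBc.le
    rw [h1]
    have h2 : (∫ v, (v ^ (n - 1) * (1 + v) ^ (-(2 * n))) / Bc
        ∂(volume.restrict (Ioi 0))) = 1 := by
      rw [integral_div, beta_value hn, ← hBcdef, div_self hBc.ne']
    rw [h2, ENNReal.ofReal_one]
  haveI hρprob : IsProbabilityMeasure ρ := ⟨hρuniv⟩
  have hφm : Measurable (fun q : (ℝ × ℝ) × ℝ => (q.1.1 + q.2 * q.1.2) / (1 + q.2)) :=
    ((measurable_fst.comp measurable_fst).add
      (measurable_snd.mul (measurable_snd.comp measurable_fst))).div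
      (measurable_const.add measurable_snd)
  refine ⟨Measure.map (fun q : (ℝ × ℝ) × ℝ => (q.1.1 + q.2 * q.1.2) / (1 + q.2))
      ((μ₁.prod μ₂).prod ρ), Measure.isProbabilityMeasure_map hφm.aemeasurable, fun u => ?_⟩
  have hg2 := cont_g (2 * n) u
  have inner : ∀ x y : ℝ,
      (∫ v, ((1:ℂ) - ((u * ((x + v * y) / (1 + v)) : ℝ) : ℂ) * Complex.I)
          ^ (-((2 * n : ℝ) : ℂ)) ∂ρ)
        = ((1:ℂ) - ((u * x : ℝ) : ℂ) * Complex.I) ^ (-(n : ℂ))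
          * ((1:ℂ) - ((u * y : ℝ) : ℂ) * Complex.I) ^ (-(n : ℂ)) := by
    intro x y
    rw [hρdef, integral_withDensity_eq_integral_smul₀ hdmeas]
    have e1 : (∫ v, (Real.toNNReal ((v ^ (n - 1) * (1 + v) ^ (-(2 * n))) / Bc))
          • (((1:ℂ) - ((u * ((x + v * y) / (1 + v)) : ℝ) : ℂ) * Complex.I)
              ^ (-((2 * n : ℝ) : ℂ))) ∂(volume.restrict (Ioi 0)))
        = ∫ v in Ioi (0:ℝ), ((v : ℂ) ^ ((n : ℂ) - 1) *
            ((((1:ℂ) - ((u * x : ℝ) : ℂ) * Complex.I))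
              + (((1:ℂ) - ((u * y : ℝ) : ℂ) * Complex.I)) * (v : ℂ)) ^ (-((2 * n : ℝ) : ℂ)))
            / (Bc : ℂ) := by
      refine setIntegral_congr_fun measurableSet_Ioi (fun v hv => ?_)
      exact density_point_eq hv hBc
    rw [e1, integral_div, key_integral hn (by rw [re_base]; norm_num)
      (by rw [re_base]; norm_num)]
    rw [Complex.Gamma_ofReal, Complex.Gamma_ofReal, hBcdef]
    have hΓnC : ((Real.Gamma n : ℝ) : ℂ) ≠ 0 := by exact_mod_cast hΓn.ne'
    have hΓ2nC : ((Real.Gamma (2 * n) : ℝ) : ℂ) ≠ 0 := by exact_mod_cast hΓ2n.ne'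
    push_cast
    field_simp
  simp only [stieltjesR]
  rw [integral_map hφm.aemeasurable hg2.aestronglyMeasurable]
  have hint : Integrable (fun q : (ℝ × ℝ) × ℝ =>
      ((1:ℂ) - ((u * ((q.1.1 + q.2 * q.1.2) / (1 + q.2)) : ℝ) : ℂ) * Complex.I)
        ^ (-((2 * n : ℝ) : ℂ)))
      ((μ₁.prod μ₂).prod ρ) := by
    refine (integrable_const (1:ℝ)).mono'
      ((hg2.measurable.comp hφm).aestronglyMeasurable) ?_
    exact ae_of_all _ fun q => norm_g_le_one h2n.le _
  rw [MeasureTheory.integral_prod _ hint]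
  rw [integral_congr_ae (ae_of_all _ fun p : ℝ × ℝ => inner p.1 p.2)]
  exact integral_prod_mul (fun x : ℝ => ((1:ℂ) - ((u * x : ℝ) : ℂ) * Complex.I) ^ (-(n : ℂ)))
    (fun y : ℝ => ((1:ℂ) - ((u * y : ℝ) : ℂ) * Complex.I) ^ (-(n : ℂ)))
end

section
/- For every real n > 0, every natural number m, and all real a, b, the following identity of finite sums holds: Σ_{k=0}^{m} C(m,k) · (n)_k (n)_{m-k} / (2n)_m · a^k b^{m-k} = Σ_{j=0}^{m} C(m,j) · (n)_j / (2n)_j · (a-b)^j b^{m-j}, where (s)_j = s(s+1)⋯(s+j-1) is the rising factorial with (s)_0 = 1. -/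
open MeasureTheory ProbabilityTheory Filter Topology Set

/-- The Beta function `B(a,b) = Γ(a)Γ(b)/Γ(a+b)`. -/
noncomputable def betaFun (a b : ℝ) : ℝ := Real.Gamma a * Real.Gamma b / Real.Gamma (a + b)

/-- The Beta(a,b) distribution on (0,1), with density `x^(a-1)(1-x)^(b-1)/B(a,b)`
on `(0,1)` and zero elsewhere. -/
noncomputable def betaMeasure (a b : ℝ) : Measure ℝ :=
  MeasureTheory.volume.withDensity fun x =>
    ENNReal.ofReal (if x ∈ Set.Ioo (0 : ℝ) 1 then
      x ^ (a - 1) * (1 - x) ^ (b - 1) / betaFun a b else 0)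

/-- The rising factorial (Pochhammer symbol) `(s)_j = s(s+1)⋯(s+j-1)`, `(s)_0 = 1`. -/
noncomputable def risingFac (s : ℝ) (j : ℕ) : ℝ := ∏ i ∈ Finset.range j, (s + i)

/-- The `β̃_{A,B}(α,β)` distribution on `(A,B)`, with density
`(x-A)^(α-1)(B-x)^(β-1)/(B(α,β)(B-A)^(α+β-1))` on `(A,B)` and zero elsewhere. -/
noncomputable def tildeBetaMeasure (A B α β : ℝ) : Measure ℝ :=
  MeasureTheory.volume.withDensity fun x =>
    ENNReal.ofReal (if x ∈ Set.Ioo A B then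
      (x - A) ^ (α - 1) * (B - x) ^ (β - 1) / (betaFun α β * (B - A) ^ (α + β - 1)) else 0)

lemma rF_succ (s : ℝ) (j : ℕ) : risingFac s (j+1) = risingFac s j * (s + j) := by
  simp [risingFac, Finset.prod_range_succ]

lemma rF_add (s : ℝ) (p q : ℕ) :
    risingFac s (p + q) = risingFac s p * risingFac (s + p) q := by
  unfold risingFac
  rw [Finset.prod_range_add]
  congr 1
  refine Finset.prod_congr rfl fun i _ => ?_
  push_cast; ring

lemma rF_pos {s : ℝ} (hs : 0 < s) (j : ℕ) : 0 < risingFac s j := by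
  apply Finset.prod_pos
  intro i _
  positivity

lemma vand (x y : ℝ) : ∀ M : ℕ,
    ∑ i ∈ Finset.range (M + 1),
      (M.choose i : ℝ) * (risingFac x i * risingFac y (M - i)) = risingFac (x + y) M := by
  intro M
  induction M with
  | zero => simp [risingFac]
  | succ M ih =>
    rw [show M + 1 + 1 = M + 2 from rfl,
      Finset.sum_choose_succ_mul (fun i j => risingFac x i * risingFac y j) M]
    have h1 : ∑ i ∈ Finset.range (M + 1),
        (M.choose i : ℝ) * (risingFac x i * risingFac y (M + 1 - i)) +
        ∑ i ∈ Finset.range (M + 1),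
        (M.choose i : ℝ) * (risingFac x (i + 1) * risingFac y (M - i)) =
        ∑ i ∈ Finset.range (M + 1),
        (M.choose i : ℝ) * (risingFac x i * risingFac y (M - i)) * (x + y + M) := by
      rw [← Finset.sum_add_distrib]
      refine Finset.sum_congr rfl fun i hi => ?_
      have hiM : i ≤ M := Nat.lt_succ_iff.mp (Finset.mem_range.mp hi)
      have h2 : M + 1 - i = (M - i) + 1 := by omega
      rw [h2, rF_succ, rF_succ]
      have : ((M - i : ℕ) : ℝ) = (M : ℝ) - i := by
        rw [Nat.cast_sub hiM]
      rw [this]; ring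
    rw [h1, ← Finset.sum_mul, ih, ← rF_succ]

lemma key (n : ℝ) {m j : ℕ} (hj : j ≤ m) :
    ∑ k ∈ Finset.range (m + 1),
      (m.choose k : ℝ) * (k.choose j : ℝ) * (risingFac n k * risingFac n (m - k)) =
    (m.choose j : ℝ) * risingFac n j * risingFac (2 * n + j) (m - j) := by
  have hsub : Finset.Ico j (m + 1) ⊆ Finset.range (m + 1) := by
    intro k hk
    simp only [Finset.mem_Ico] at hk
    exact Finset.mem_range.mpr hk.2
  rw [← Finset.sum_subset hsub (by
    intro k hk hk'
    simp only [Finset.mem_range] at hk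
    simp only [Finset.mem_Ico, not_and, not_lt] at hk'
    have : k < j := by omega
    simp [Nat.choose_eq_zero_of_lt this])]
  rw [Finset.sum_Ico_eq_sum_range]
  have hr : m + 1 - j = (m - j) + 1 := by omega
  rw [hr]
  have step : ∀ i ∈ Finset.range ((m - j) + 1),
      (m.choose (j + i) : ℝ) * ((j + i).choose j : ℝ) *
        (risingFac n (j + i) * risingFac n (m - (j + i))) =
      (m.choose j : ℝ) * risingFac n j *
        (((m - j).choose i : ℝ) * (risingFac (n + j) i * risingFac n ((m - j) - i))) := by
    intro i hi
    have him : j + i ≤ m := by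
      simp only [Finset.mem_range] at hi; omega
    have hc : (m.choose (j + i)) * ((j + i).choose j) = m.choose j * (m - j).choose i := by
      have := Nat.choose_mul (n := m) (Nat.le_add_right j i)
      simpa using this
    have hc' : ((m.choose (j + i) : ℝ)) * ((j + i).choose j : ℝ) =
        (m.choose j : ℝ) * ((m - j).choose i : ℝ) := by
      exact_mod_cast congrArg (Nat.cast : ℕ → ℝ) hc
    have hsub2 : m - (j + i) = (m - j) - i := by omega
    rw [hc', rF_add n j i, hsub2]
    ring
  rw [Finset.sum_congr rfl step, ← Finset.mul_sum, vand (n + j) n (m - j)]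
  rw [show n + (j : ℝ) + n = 2 * n + j by ring]

/-- For real `n > 0`, `m : ℕ` and reals `a, b`:
`Σ_{k=0}^m C(m,k) (n)_k (n)_{m-k} / (2n)_m a^k b^{m-k}
  = Σ_{j=0}^m C(m,j) (n)_j / (2n)_j (a-b)^j b^{m-j}`. -/
theorem moment_sum_hypergeometric_form (n : ℝ) (hn : 0 < n) (m : ℕ) (a b : ℝ) :
    ∑ k ∈ Finset.range (m + 1),
        (m.choose k : ℝ) * (risingFac n k * risingFac n (m - k)) / risingFac (2 * n) m *
          a ^ k * b ^ (m - k) =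
      ∑ j ∈ Finset.range (m + 1),
        (m.choose j : ℝ) * risingFac n j / risingFac (2 * n) j * (a - b) ^ j * b ^ (m - j) := by
  have ha : ∀ k : ℕ, a ^ k =
      ∑ j ∈ Finset.range (k + 1), (a - b) ^ j * b ^ (k - j) * (k.choose j : ℝ) := by
    intro k
    have h := add_pow (a - b) b k
    rw [show a - b + b = a by ring] at h
    exact h
  have step1 : ∀ k ∈ Finset.range (m + 1),
      (m.choose k : ℝ) * (risingFac n k * risingFac n (m - k)) / risingFac (2 * n) m *
        a ^ k * b ^ (m - k) =
      ∑ j ∈ Finset.range (m + 1),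
        (m.choose k : ℝ) * (k.choose j : ℝ) * (risingFac n k * risingFac n (m - k)) *
          ((a - b) ^ j * b ^ (m - j)) / risingFac (2 * n) m := by
    intro k hk
    have hkm : k ≤ m := Nat.lt_succ_iff.mp (Finset.mem_range.mp hk)
    rw [ha k, ← Finset.sum_subset (Finset.range_subset_range.mpr (by omega : k + 1 ≤ m + 1)) (by
      intro j hj hj'
      simp only [Finset.mem_range, not_lt] at hj'
      have : k < j := by omega
      simp [Nat.choose_eq_zero_of_lt this])]
    rw [Finset.mul_sum, Finset.sum_mul]
    refine Finset.sum_congr rfl fun j hj => ?_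
    have hjk : j < k + 1 := Finset.mem_range.mp hj
    have hpow : b ^ (k - j) * b ^ (m - k) = b ^ (m - j) := by
      rw [← pow_add]
      congr 1
      omega
    field_simp
    rw [← hpow]
    ring
  rw [Finset.sum_congr rfl step1, Finset.sum_comm]
  refine Finset.sum_congr rfl fun j hj => ?_
  have hjm : j ≤ m := Nat.lt_succ_iff.mp (Finset.mem_range.mp hj)
  have hsum : ∀ k ∈ Finset.range (m + 1),
      (m.choose k : ℝ) * (k.choose j : ℝ) * (risingFac n k * risingFac n (m - k)) *
        ((a - b) ^ j * b ^ (m - j)) / risingFac (2 * n) m =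
      (m.choose k : ℝ) * (k.choose j : ℝ) * (risingFac n k * risingFac n (m - k)) *
        (((a - b) ^ j * b ^ (m - j)) / risingFac (2 * n) m) := fun k _ => by ring
  rw [Finset.sum_congr rfl hsum, ← Finset.sum_mul, key n hjm]
  have hsplit : risingFac (2 * n) m = risingFac (2 * n) j * risingFac (2 * n + j) (m - j) := by
    rw [← rF_add]
    congr 1
    omega
  have h1 : risingFac (2 * n) j ≠ 0 := ne_of_gt (rF_pos (by linarith) j)
  have h2 : risingFac (2 * n + j) (m - j) ≠ 0 :=
    ne_of_gt (rF_pos (by positivity) (m - j))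
  rw [hsplit]
  field_simp
end

section
/- Let μ be a probability measure on the Borel subsets of ℝ and fix u ∈ ℝ. Then lim_{γ → ∞} ∫_ℝ (1 - i (u/γ) x)^{-γ} dμ(x) = ∫_ℝ e^{iux} dμ(x), where the limit is taken as the real parameter γ tends to +∞. -/
open MeasureTheory ProbabilityTheory Filter Topology Set
open MeasureTheory Filter Topology Set Complex

lemma cpow_tendsto_exp (t : ℝ) :
    Tendsto (fun γ : ℝ => ((1 : ℂ) - (t / γ : ℝ) * Complex.I) ^ (-(γ : ℂ))) atTop
      (𝓝 (Complex.exp ((t : ℝ) * Complex.I))) := by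
  rcases eq_or_ne t 0 with rfl | ht
  · simp
  set z : ℝ → ℂ := fun γ => (1 : ℂ) - (t / γ : ℝ) * Complex.I with hz
  have hzre : ∀ γ, (z γ).re = 1 := by intro γ; simp [hz]
  have hzne : ∀ γ, z γ ≠ 0 := by
    intro γ h
    have := hzre γ
    rw [h] at this; simp at this
  -- z γ → 1 within {1}ᶜ
  have hz1 : Tendsto z atTop (𝓝[≠] (1 : ℂ)) := by
    apply tendsto_nhdsWithin_of_tendsto_nhds_of_eventually_within
    · have : Tendsto (fun γ : ℝ => t / γ) atTop (𝓝 0) := tendsto_const_nhds.div_atTop tendsto_id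
      have : Tendsto (fun γ : ℝ => ((t / γ : ℝ) : ℂ)) atTop (𝓝 0) := by
        simpa [Function.comp_def] using (Complex.continuous_ofReal.tendsto 0).comp this
      have h3 : Tendsto z atTop (𝓝 ((1:ℂ) - (0:ℂ) * Complex.I)) :=
        tendsto_const_nhds.sub (this.mul tendsto_const_nhds)
      simpa using h3
    · filter_upwards [eventually_gt_atTop (0 : ℝ)] with γ hγ
      simp only [mem_compl_iff, mem_singleton_iff, hz]
      intro h
      have : ((t / γ : ℝ) : ℂ) * Complex.I = 0 := by linear_combination -h
      simp [div_eq_zero_iff, ht, hγ.ne', Complex.ext_iff] at this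
  -- slope of log at 1
  have hlog : Tendsto (fun γ => slope Complex.log 1 (z γ)) atTop (𝓝 1) := by
    have h := (Complex.hasDerivAt_log (z := 1) (by simp [Complex.mem_slitPlane_iff]))
    rw [hasDerivAt_iff_tendsto_slope] at h
    simpa [Function.comp_def] using h.comp hz1
  have key : Tendsto (fun γ : ℝ => -(γ : ℂ) * Complex.log (z γ)) atTop (𝓝 ((t : ℝ) * Complex.I)) := by
    have h2 : Tendsto (fun γ => slope Complex.log 1 (z γ) * ((t : ℝ) * Complex.I)) atTop
        (𝓝 (1 * ((t : ℝ) * Complex.I))) := hlog.mul tendsto_const_nhds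
    rw [one_mul] at h2
    apply h2.congr'
    filter_upwards [eventually_gt_atTop (0 : ℝ)] with γ hγ
    have hγ' : (γ : ℂ) ≠ 0 := by exact_mod_cast hγ.ne'
    have hne : z γ - 1 ≠ 0 := by
      simp only [hz]
      intro h
      have : ((t / γ : ℝ) : ℂ) * Complex.I = 0 := by linear_combination -h
      simp [div_eq_zero_iff, ht, hγ.ne', Complex.ext_iff] at this
    rw [slope_def_field, div_mul_eq_mul_div, div_eq_iff hne]
    simp only [hz, Complex.log_one, sub_zero, Complex.ofReal_div]
    field_simp
    ring
  have : Tendsto (fun γ : ℝ => Complex.exp (-(γ : ℂ) * Complex.log (z γ))) atTop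
      (𝓝 (Complex.exp ((t : ℝ) * Complex.I))) := (Complex.continuous_exp.tendsto _).comp key
  apply this.congr'
  filter_upwards with γ
  rw [Complex.cpow_def_of_ne_zero (hzne γ), mul_comm]


/-- For a probability measure `μ` on ℝ and fixed `u : ℝ`,
`∫ (1 - i(u/γ)x)^{-γ} dμ(x) → ∫ e^{iux} dμ(x)` as `γ → +∞`. -/
theorem stieltjesR_tendsto_fourier (μ : Measure ℝ) [IsProbabilityMeasure μ] (u : ℝ) :
    Tendsto (fun γ : ℝ => ∫ x, (1 - (u / γ * x : ℝ) * Complex.I) ^ (-(γ : ℂ)) ∂μ)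
      atTop (𝓝 (∫ x, Complex.exp ((u * x : ℝ) * Complex.I) ∂μ)) := by
  have key : ∀ x : ℝ, Tendsto (fun γ : ℝ => ((1:ℂ) - (u / γ * x : ℝ) * Complex.I) ^ (-(γ : ℂ)))
      atTop (𝓝 (Complex.exp ((u * x : ℝ) * Complex.I))) := by
    intro x
    have := cpow_tendsto_exp (u * x)
    apply this.congr'
    filter_upwards with γ
    push_cast
    ring_nf
  apply tendsto_integral_filter_of_dominated_convergence (fun _ => (1 : ℝ))
  · filter_upwards with γ
    apply Continuous.aestronglyMeasurable
    apply Continuous.cpow _ continuous_const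
    · intro x
      simp [Complex.mem_slitPlane_iff]
    · fun_prop
  · filter_upwards [eventually_ge_atTop (0 : ℝ)] with γ hγ
    filter_upwards with x
    set w : ℂ := (1:ℂ) - (u / γ * x : ℝ) * Complex.I with hw
    have hwne : w ≠ 0 := by
      intro h
      have : w.re = 1 := by simp [hw]
      rw [h] at this; simp at this
    have h1 : 1 ≤ ‖w‖ := by
      have := Complex.abs_re_le_norm w
      simp only [hw] at this ⊢
      simpa using this
    rw [Complex.norm_cpow_of_ne_zero hwne]
    simp only [Complex.neg_re, Complex.ofReal_re, Complex.neg_im, Complex.ofReal_im, neg_zero,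
      mul_zero, Real.exp_zero, div_one]
    exact Real.rpow_le_one_of_one_le_of_nonpos h1 (neg_nonpos.mpr hγ)
  · exact integrable_const 1
  · filter_upwards with x using key x
end

section
/- Let μ be a probability measure on the Borel subsets of ℝ, fix u ∈ ℝ, and assume the function x ↦ Log(1 - iux) is μ-integrable (Log the principal complex logarithm). Then lim_{γ → 0⁺} (R_γ(u; μ) - 1)/γ = ∫_ℝ log(1/(1 - iux)) dμ(x) = -∫_ℝ Log(1 - iux) dμ(x). -/
open MeasureTheory ProbabilityTheory Filter Topology Set

lemma norm_exp_sub_one_le_of_re_nonpos {w : ℂ} (hw : w.re ≤ 0) :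
    ‖Complex.exp w - 1‖ ≤ ‖w‖ := by
  have hconv : Convex ℝ {z : ℂ | z.re ≤ 0} := convex_halfSpace_re_le 0
  have hb : ∀ z ∈ {z : ℂ | z.re ≤ 0},
      ‖(ContinuousLinearMap.smulRight (1 : ℂ →L[ℂ] ℂ) (Complex.exp z)).restrictScalars ℝ‖ ≤ 1 := by
    intro z hz
    rw [ContinuousLinearMap.norm_restrictScalars, ContinuousLinearMap.norm_smulRight_apply]
    simp only [norm_one, one_mul]
    rw [Complex.norm_exp]
    exact Real.exp_le_one_iff.2 hz
  have h := hconv.norm_image_sub_le_of_norm_hasFDerivWithin_le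
    (fun z _ => ((Complex.hasDerivAt_exp z).hasFDerivAt.restrictScalars ℝ).hasFDerivWithinAt)
    hb (by simp : (0:ℂ) ∈ {z : ℂ | z.re ≤ 0}) (hw : w ∈ {z : ℂ | z.re ≤ 0})
  simpa using h

/-- If `x ↦ Log(1 - iux)` is `μ`-integrable, then
`(R_γ(u; μ) - 1)/γ → -∫ Log(1 - iux) dμ(x)` as `γ → 0⁺`. -/
theorem stieltjesR_deriv_at_zero (μ : Measure ℝ) [IsProbabilityMeasure μ] (u : ℝ)
    (hInt : Integrable (fun x : ℝ => Complex.log (1 - (u * x : ℝ) * Complex.I)) μ) :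
    Tendsto (fun γ : ℝ => (stieltjesR γ μ u - 1) / (γ : ℂ))
      (𝓝[>] 0) (𝓝 (-∫ x, Complex.log (1 - (u * x : ℝ) * Complex.I) ∂μ)) := by
  set z : ℝ → ℂ := fun x => 1 - (u * x : ℝ) * Complex.I with hz_def
  set L : ℝ → ℂ := fun x => Complex.log (z x) with hL_def
  have hre : ∀ x, (z x).re = 1 := by intro x; simp [hz_def]
  have hz0 : ∀ x, z x ≠ 0 := by
    intro x h
    have := hre x
    rw [h] at this; simp at this
  have hLre : ∀ x, 0 ≤ (L x).re := by
    intro x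
    rw [hL_def, Complex.log_re]
    apply Real.log_nonneg
    calc (1:ℝ) = |(z x).re| := by rw [hre]; norm_num
    _ ≤ ‖z x‖ := Complex.abs_re_le_norm _
  have hcpow : ∀ (γ : ℝ) (x : ℝ), z x ^ (-(γ:ℂ)) = Complex.exp (L x * (-(γ:ℂ))) := by
    intro γ x
    rw [Complex.cpow_def_of_ne_zero (hz0 x)]
  have hwre : ∀ (γ : ℝ), 0 ≤ γ → ∀ x, (L x * (-(γ:ℂ))).re ≤ 0 := by
    intro γ hγ x
    have h : (L x * (-(γ:ℂ))).re = (L x).re * (-γ) := by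
      simp [Complex.mul_re]
    rw [h]
    exact mul_nonpos_of_nonneg_of_nonpos (hLre x) (by linarith)
  have hnorm_le : ∀ (γ : ℝ), 0 < γ → ∀ x, ‖(z x ^ (-(γ:ℂ)) - 1) / (γ:ℂ)‖ ≤ ‖L x‖ := by
    intro γ hγ x
    rw [hcpow, norm_div]
    have h1 : ‖Complex.exp (L x * (-(γ:ℂ))) - 1‖ ≤ ‖L x * (-(γ:ℂ))‖ :=
      norm_exp_sub_one_le_of_re_nonpos (hwre γ hγ.le x)
    have h2 : ‖L x * (-(γ:ℂ))‖ = ‖L x‖ * γ := by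
      rw [norm_mul]; simp [abs_of_pos hγ]
    rw [div_le_iff₀ (by simpa [abs_of_pos hγ] using hγ : (0:ℝ) < ‖(γ:ℂ)‖)]
    calc ‖Complex.exp (L x * (-(γ:ℂ))) - 1‖ ≤ ‖L x‖ * γ := h1.trans h2.le
    _ = ‖L x‖ * ‖(γ:ℂ)‖ := by simp [abs_of_pos hγ]
  have hcont : ∀ γ : ℝ, Continuous (fun x => z x ^ (-(γ:ℂ))) := by
    intro γ
    apply Continuous.cpow _ continuous_const
    · intro x
      rw [Complex.mem_slitPlane_iff, hre]
      left; norm_num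
    · exact continuous_const.sub ((Complex.continuous_ofReal.comp
        (continuous_const.mul continuous_id)).mul continuous_const)
  have hint_cpow : ∀ γ : ℝ, 0 < γ → Integrable (fun x => z x ^ (-(γ:ℂ))) μ := by
    intro γ hγ
    apply Integrable.mono' (integrable_const (1:ℝ)) (hcont γ).aestronglyMeasurable
    filter_upwards with x
    rw [hcpow, Complex.norm_exp]
    exact Real.exp_le_one_iff.2 (hwre γ hγ.le x)
  have hDCT : Tendsto (fun γ : ℝ => ∫ x, (z x ^ (-(γ:ℂ)) - 1) / (γ:ℂ) ∂μ)
      (𝓝[>] 0) (𝓝 (∫ x, -(L x) ∂μ)) := by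
    apply tendsto_integral_filter_of_dominated_convergence (fun x => ‖L x‖)
    · filter_upwards with γ
      exact (((hcont γ).sub continuous_const).div_const _).aestronglyMeasurable
    · filter_upwards [self_mem_nhdsWithin] with γ (hγ : 0 < γ)
      filter_upwards with x
      exact hnorm_le γ hγ x
    · exact hInt.norm
    · filter_upwards with x
      have h1 : HasDerivAt (fun γ : ℝ => (γ:ℂ)) 1 0 := by
        simpa using (hasDerivAt_id (0:ℝ)).ofReal_comp
      have h2 : HasDerivAt (fun γ : ℝ => L x * (-(γ:ℂ))) (-(L x)) 0 := by
        simpa [mul_comm] using (h1.neg.const_mul (L x))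
      have h3 : HasDerivAt (fun γ : ℝ => Complex.exp (L x * (-(γ:ℂ)))) (-(L x)) 0 := by
        simpa using h2.cexp
      have h4 := hasDerivAt_iff_tendsto_slope.1 h3
      have h5 : Tendsto (slope (fun γ : ℝ => Complex.exp (L x * (-(γ:ℂ)))) 0)
          (𝓝[>] 0) (𝓝 (-(L x))) :=
        h4.mono_left (nhdsWithin_mono _ (fun y hy => ne_of_gt hy))
      apply h5.congr'
      filter_upwards [self_mem_nhdsWithin] with γ (hγ : 0 < γ)
      rw [slope_def_module]
      simp [Complex.real_smul, hcpow, div_eq_inv_mul]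
  have heq : (fun γ : ℝ => (stieltjesR γ μ u - 1) / (γ:ℂ))
      =ᶠ[𝓝[>] 0] (fun γ : ℝ => ∫ x, (z x ^ (-(γ:ℂ)) - 1) / (γ:ℂ) ∂μ) := by
    filter_upwards [self_mem_nhdsWithin] with γ (hγ : 0 < γ)
    rw [integral_div]
    congr 1
    rw [integral_sub (hint_cpow γ hγ) (integrable_const 1)]
    simp [stieltjesR, hz_def]
  rw [show (-∫ x, Complex.log (1 - (u * x : ℝ) * Complex.I) ∂μ) = ∫ x, -(L x) ∂μ by
    rw [integral_neg]]
  exact Tendsto.congr' heq.symm hDCT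
end

section
/- Let μ be a probability measure on ℝ whose support is contained in the interval [-M, M] for some M > 0, let γ > 0, and let u ∈ ℝ satisfy |u| · M < 1. Then the modified Stieltjes transform admits the convergent series expansion R_γ(u; μ) = Σ_{k=0}^{∞} ((γ)_k / k!) · (iu)^k · κ_k(μ), where κ_k(μ) = ∫_ℝ x^k dμ(x) is the k-th moment of μ and (γ)_k = γ(γ+1)⋯(γ+k-1) with (γ)_0 = 1. -/
open MeasureTheory ProbabilityTheory Filter Topology Set

namespace StieltjesAux


noncomputable def aco (γ : ℝ) (k : ℕ) : ℝ := risingFac γ k / k.factorial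

lemma risingFac_succ (s : ℝ) (k : ℕ) : risingFac s (k + 1) = risingFac s k * (s + k) :=
  Finset.prod_range_succ _ _

lemma risingFac_shift (s : ℝ) (k : ℕ) : risingFac s (k + 1) = s * risingFac (s + 1) k := by
  rw [risingFac, risingFac, Finset.prod_range_succ']
  rw [mul_comm]
  congr 1
  · push_cast; simp
  · refine Finset.prod_congr rfl fun i _ => ?_
    push_cast; ring

lemma risingFac_pos {γ : ℝ} (hγ : 0 < γ) (k : ℕ) : 0 < risingFac γ k :=
  Finset.prod_pos fun i _ => by positivity

lemma aco_pos {γ : ℝ} (hγ : 0 < γ) (k : ℕ) : 0 < aco γ k :=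
  div_pos (risingFac_pos hγ k) (by positivity)

lemma aco_zero (γ : ℝ) : aco γ 0 = 1 := by simp [aco, risingFac]

lemma aco_succ_mul (γ : ℝ) (k : ℕ) : aco γ (k + 1) * ((k : ℝ) + 1) = aco γ k * (γ + k) := by
  have hk : ((k.factorial : ℝ)) ≠ 0 := by positivity
  rw [aco, aco, risingFac_succ, Nat.factorial_succ]
  push_cast
  field_simp

lemma aco_shift (γ : ℝ) (k : ℕ) : aco γ k * (γ + k) = γ * aco (γ + 1) k := by
  rw [aco, aco, div_mul_eq_mul_div, ← risingFac_succ, risingFac_shift]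
  ring

lemma aco_succ (γ : ℝ) (k : ℕ) : aco γ (k + 1) = aco γ k * (γ + k) / ((k : ℝ) + 1) := by
  rw [eq_div_iff (by positivity : ((k:ℝ) + 1) ≠ 0)]
  exact aco_succ_mul γ k

lemma summable_aco {γ : ℝ} (hγ : 0 < γ) {q : ℝ} (hq0 : 0 ≤ q) (hq1 : q < 1) :
    Summable fun k => aco γ k * q ^ k := by
  rcases eq_or_lt_of_le hq0 with h0 | h0
  · refine (hasSum_single (f := fun k => aco γ k * q ^ k) 0 fun b hb => ?_).summable
    simp [← h0, zero_pow hb]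
  · apply summable_of_ratio_test_tendsto_lt_one hq1
    · filter_upwards with n
      exact ne_of_gt (mul_pos (aco_pos hγ n) (pow_pos h0 n))
    · have key : ∀ n : ℕ, ‖aco γ (n + 1) * q ^ (n + 1)‖ / ‖aco γ n * q ^ n‖
          = q * (1 + (γ - 1) / ((n : ℝ) + 1)) := by
        intro n
        have h1 : (0:ℝ) < aco γ n * q ^ n := mul_pos (aco_pos hγ n) (pow_pos h0 n)
        have h2 : (0:ℝ) < aco γ (n + 1) * q ^ (n + 1) :=
          mul_pos (aco_pos hγ (n + 1)) (pow_pos h0 (n + 1))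
        rw [Real.norm_of_nonneg h1.le, Real.norm_of_nonneg h2.le, aco_succ, pow_succ]
        have hne : aco γ n ≠ 0 := (aco_pos hγ n).ne'
        have hqn : q ^ n ≠ 0 := (pow_pos h0 n).ne'
        have hn1 : ((n:ℝ) + 1) ≠ 0 := by positivity
        field_simp
        ring
      rw [funext key]
      have h1 : Tendsto (fun n : ℕ => (γ - 1) / ((n : ℝ) + 1)) atTop (𝓝 0) :=
        Tendsto.div_atTop tendsto_const_nhds
          (tendsto_atTop_add_const_right _ 1 tendsto_natCast_atTop_atTop)
      have h2 : Tendsto (fun n : ℕ => q * (1 + (γ - 1) / ((n : ℝ) + 1))) atTop (𝓝 (q * (1 + 0))) :=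
        (((tendsto_const_nhds : Tendsto (fun _ : ℕ => (1:ℝ)) atTop (𝓝 1)).add h1).const_mul q)
      simpa using h2

lemma summable_aco_c {γ : ℝ} (hγ : 0 < γ) {z : ℂ} (hz : ‖z‖ < 1) :
    Summable fun k => ((aco γ k : ℝ) : ℂ) * z ^ k := by
  apply Summable.of_norm
  have h := summable_aco hγ (norm_nonneg z) hz
  refine h.congr fun k => ?_
  simp [norm_mul, abs_of_pos (aco_pos hγ k)]

lemma summable_deriv {γ : ℝ} (hγ : 0 < γ) {r : ℝ} (h0 : 0 ≤ r) (h1 : r < 1) :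
    Summable fun k : ℕ => aco γ k * k * r ^ (k - 1) := by
  rw [← summable_nat_add_iff 1]
  have heq : ∀ k : ℕ, aco γ (k + 1) * ((k + 1 : ℕ) : ℝ) * r ^ (k + 1 - 1)
      = γ * (aco (γ + 1) k * r ^ k) := by
    intro k
    rw [Nat.add_sub_cancel]
    push_cast
    rw [aco_succ_mul, aco_shift]
    ring
  exact (funext heq) ▸ ((summable_aco (by linarith) h0 h1).mul_left γ)


noncomputable def Gf (γ : ℝ) (w : ℂ) : ℂ := ∑' k : ℕ, ((aco γ k : ℝ) : ℂ) * w ^ k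

noncomputable def Df (γ : ℝ) (w : ℂ) : ℂ :=
  ∑' k : ℕ, ((aco γ k : ℝ) : ℂ) * ((k : ℂ) * w ^ (k - 1))

lemma hasSum_G {γ : ℝ} (hγ : 0 < γ) {w : ℂ} (hw : ‖w‖ < 1) :
    HasSum (fun k : ℕ => ((aco γ k : ℝ) : ℂ) * w ^ k) (Gf γ w) :=
  (summable_aco_c hγ hw).hasSum

lemma hasSum_D {γ : ℝ} (hγ : 0 < γ) {w : ℂ} (hw : ‖w‖ < 1) :
    HasSum (fun k : ℕ => ((aco γ k : ℝ) : ℂ) * ((k : ℂ) * w ^ (k - 1))) (Df γ w) := by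
  apply Summable.hasSum
  apply Summable.of_norm
  refine (summable_deriv hγ (norm_nonneg w) hw).congr fun k => ?_
  simp [norm_mul, abs_of_pos (aco_pos hγ k), mul_assoc]

lemma summable_at_zero (γ : ℝ) : Summable (fun k : ℕ => ((aco γ k : ℝ) : ℂ) * (0:ℂ) ^ k) :=
  (hasSum_single (f := fun k : ℕ => ((aco γ k : ℝ) : ℂ) * (0:ℂ) ^ k) 0 fun b hb => by
    simp [zero_pow hb]).summable

set_option maxHeartbeats 1000000 in
lemma hasDerivAt_G {γ : ℝ} (hγ : 0 < γ) {w : ℂ} (hw : ‖w‖ < 1) :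
    HasDerivAt (Gf γ) (Df γ w) w := by
  unfold Gf Df
  set r : ℝ := (‖w‖ + 1) / 2 with hr
  have hr0 : 0 < r := by positivity
  have hwr : ‖w‖ < r := by rw [hr]; linarith
  have hr1 : r < 1 := by rw [hr]; linarith
  refine hasDerivAt_tsum_of_isPreconnected
    (u := fun k : ℕ => aco γ k * k * r ^ (k - 1))
    (g' := fun k y => ((aco γ k : ℝ) : ℂ) * ((k : ℂ) * y ^ (k - 1)))
    (summable_deriv hγ hr0.le hr1) Metric.isOpen_ball
    ((convex_ball (0 : ℂ) r).isPreconnected)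
    (fun k y _ => ?_) (fun k y hy => ?_)
    (Metric.mem_ball_self hr0)
    (summable_at_zero γ)
    (by simpa [Metric.mem_ball, dist_zero_right] using hwr)
  · simpa using (hasDerivAt_pow k y).const_mul (((aco γ k : ℝ) : ℂ))
  · have hy' : ‖y‖ < r := by simpa [Metric.mem_ball, dist_zero_right] using hy
    have heq : ‖((aco γ k : ℝ) : ℂ) * ((k : ℂ) * y ^ (k - 1))‖
        = aco γ k * k * ‖y‖ ^ (k - 1) := by
      simp [norm_mul, abs_of_pos (aco_pos hγ k), mul_assoc]
    rw [heq]
    exact mul_le_mul_of_nonneg_left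
      (pow_le_pow_left₀ (norm_nonneg y) hy'.le _)
      (mul_nonneg (aco_pos hγ k).le (Nat.cast_nonneg k))

lemma key_identity {γ : ℝ} (hγ : 0 < γ) {w : ℂ} (hw : ‖w‖ < 1) :
    (1 - w) * Df γ w = (γ : ℂ) * Gf γ w := by
  have SD := hasSum_D hγ hw
  have SD' : HasSum (fun k => ((aco γ k * (γ + (k:ℕ)) : ℝ) : ℂ) * w ^ k) (Df γ w) := by
    have h := (hasSum_nat_add_iff'
      (f := fun k => ((aco γ k : ℝ) : ℂ) * ((k : ℂ) * w ^ (k - 1))) 1).mpr SD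
    simp only [Finset.range_one, Finset.sum_singleton, Nat.cast_zero, zero_mul, mul_zero,
      sub_zero] at h
    have heq : (fun k : ℕ => ((aco γ (k + 1) : ℝ) : ℂ) * (((k + 1 : ℕ) : ℂ) * w ^ (k + 1 - 1)))
        = fun k : ℕ => ((aco γ k * (γ + (k:ℕ)) : ℝ) : ℂ) * w ^ k := by
      funext k
      have hm := aco_succ_mul γ k
      have hmc := congrArg (Complex.ofReal) hm
      push_cast at hmc
      rw [Nat.add_sub_cancel]
      push_cast
      linear_combination w ^ k * hmc
    rwa [heq] at h
  have Sb : HasSum (fun k => ((aco γ k * (k:ℕ) : ℝ) : ℂ) * w ^ k) (w * Df γ w) := by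
    have h1 := SD'.mul_left w
    have heq : (fun k : ℕ => w * (((aco γ k * (γ + (k:ℕ)) : ℝ) : ℂ) * w ^ k))
        = fun k : ℕ => ((aco γ (k+1) * (((k+1:ℕ)):ℝ) : ℝ) : ℂ) * w ^ (k+1) := by
      funext k
      have hm := aco_succ_mul γ k
      have hmc := congrArg (Complex.ofReal) hm
      push_cast at hmc
      push_cast
      linear_combination -w ^ (k + 1) * hmc
    rw [heq] at h1
    have h2 := (hasSum_nat_add_iff
      (f := fun k : ℕ => ((aco γ k * ((k:ℕ):ℝ) : ℝ) : ℂ) * w ^ k) 1).mp h1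
    simpa using h2
  have Sg := (hasSum_G hγ hw).mul_left (γ : ℂ)
  have Scomb := SD'.sub Sb
  have heq2 : (fun k : ℕ => ((aco γ k * (γ + (k:ℕ)) : ℝ) : ℂ) * w ^ k
      - ((aco γ k * (k:ℕ) : ℝ) : ℂ) * w ^ k)
      = fun k : ℕ => (γ : ℂ) * (((aco γ k : ℝ) : ℂ) * w ^ k) := by
    funext k; push_cast; ring
  rw [heq2] at Scomb
  have h := Scomb.unique Sg
  linear_combination h

lemma binomial_hasSum {γ : ℝ} (hγ : 0 < γ) {z : ℂ} (hz : ‖z‖ < 1) :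
    HasSum (fun k => ((aco γ k : ℝ) : ℂ) * z ^ k) ((1 - z) ^ (-(γ : ℂ))) := by
  have hslit : ∀ w : ℂ, ‖w‖ < 1 → (1 - w) ∈ Complex.slitPlane := by
    intro w hw
    rw [Complex.mem_slitPlane_iff]
    left
    have h1 : |w.re| ≤ ‖w‖ := Complex.abs_re_le_norm w
    have h2 : w.re ≤ |w.re| := le_abs_self _
    simp only [Complex.sub_re, Complex.one_re]
    linarith
  have hne : ∀ w : ℂ, ‖w‖ < 1 → (1 - w) ≠ 0 := by
    intro w hw h
    rw [sub_eq_zero] at h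
    rw [← h] at hw
    simp at hw
  have hder0 : ∀ y ∈ Metric.ball (0:ℂ) 1,
      HasDerivAt (fun v => Gf γ v * (1 - v) ^ (γ : ℂ)) 0 y := by
    intro y hy
    have hy1 : ‖y‖ < 1 := by simpa [Metric.mem_ball, dist_zero_right] using hy
    have h1 := hasDerivAt_G hγ hy1
    have hsub : HasDerivAt (fun v : ℂ => 1 - v) (-1) y := by
      simpa using (hasDerivAt_id y).const_sub 1
    have h2 : HasDerivAt (fun v : ℂ => (1 - v) ^ (γ : ℂ))
        ((γ : ℂ) * (1 - y) ^ ((γ : ℂ) - 1) * (-1)) y :=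
      HasDerivAt.cpow_const hsub (hslit y hy1)
    have h3 := h1.mul h2
    have hcp : (1 - y) ^ (γ : ℂ) = (1 - y) ^ ((γ : ℂ) - 1) * (1 - y) := by
      conv_lhs => rw [show (γ : ℂ) = ((γ : ℂ) - 1) + 1 by ring]
      rw [Complex.cpow_add _ _ (hne y hy1), Complex.cpow_one]
    have hk := key_identity hγ hy1
    refine h3.congr_deriv ?_
    rw [hcp]
    linear_combination (1 - y) ^ ((γ:ℂ) - 1) * hk
  have hconst : Gf γ z * (1 - z) ^ (γ : ℂ) = 1 := by
    have hzball : z ∈ Metric.ball (0:ℂ) 1 := by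
      simpa [Metric.mem_ball, dist_zero_right] using hz
    have h0ball : (0:ℂ) ∈ Metric.ball (0:ℂ) 1 := Metric.mem_ball_self one_pos
    have hcst := (convex_ball (0:ℂ) 1).is_const_of_fderivWithin_eq_zero
      (f := fun v => Gf γ v * (1 - v) ^ (γ : ℂ))
      (fun y hy => ((hder0 y hy).differentiableAt).differentiableWithinAt)
      (fun y hy => by
        rw [fderivWithin_of_isOpen Metric.isOpen_ball hy]
        rw [((hder0 y hy).hasFDerivAt).fderiv]
        ext1
        simp)
      hzball h0ball
    have hG0 : Gf γ 0 = 1 := by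
      have hs : HasSum (fun k => ((aco γ k : ℝ) : ℂ) * (0:ℂ) ^ k) 1 := by
        have h := hasSum_single (f := fun k => ((aco γ k : ℝ) : ℂ) * (0:ℂ) ^ k) 0
          (fun b hb => by simp [zero_pow hb])
        simpa [aco_zero] using h
      exact hs.tsum_eq
    rw [hcst]
    simp [hG0]
  have hBne : (1 - z) ^ (γ : ℂ) ≠ 0 := by
    intro h
    rw [Complex.cpow_eq_zero_iff] at h
    exact hne z hz h.1
  have hGz : Gf γ z = (1 - z) ^ (-(γ : ℂ)) := by
    rw [Complex.cpow_neg]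
    field_simp
    linear_combination hconst
  have h := hasSum_G hγ hz
  rwa [hGz] at h


end StieltjesAux

open StieltjesAux

/-- If `μ` is a probability measure supported in `[-M, M]`, `γ > 0` and `|u| M < 1`,
then `R_γ(u; μ) = Σ_{k=0}^∞ ((γ)_k / k!) (iu)^k κ_k(μ)` as a convergent series,
where `κ_k(μ) = ∫ x^k dμ`. -/
theorem stieltjesR_series_expansion (μ : Measure ℝ) [IsProbabilityMeasure μ]
    (M : ℝ) (hM : 0 < M) (hsupp : μ (Set.Icc (-M) M)ᶜ = 0)
    (γ : ℝ) (hγ : 0 < γ) (u : ℝ) (hu : |u| * M < 1) :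
    HasSum
      (fun k : ℕ =>
        ((risingFac γ k / k.factorial : ℝ) : ℂ) * ((u : ℂ) * Complex.I) ^ k *
          ((∫ x, x ^ k ∂μ : ℝ) : ℂ))
      (stieltjesR γ μ u) := by
  have hae : ∀ᵐ x ∂μ, x ∈ Set.Icc (-M) M := by
    rw [ae_iff]
    exact hsupp
  set F : ℕ → ℝ → ℂ := fun k x =>
    ((aco γ k : ℝ) : ℂ) * ((u : ℂ) * Complex.I) ^ k * ((x : ℂ)) ^ k with hF
  have hint : ∀ k, Integrable (F k) μ := by
    intro k
    apply Integrable.const_mul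
    refine Integrable.mono' (integrable_const (M ^ k))
      ((Complex.continuous_ofReal.pow k).aestronglyMeasurable) ?_
    filter_upwards [hae] with x hx
    have : |x| ≤ M := abs_le.mpr ⟨hx.1, hx.2⟩
    calc ‖((x : ℂ)) ^ k‖ = |x| ^ k := by
          simp [norm_pow]
      _ ≤ M ^ k := pow_le_pow_left₀ (abs_nonneg x) this k
  have hnorm_le : ∀ k, (∫ x, ‖F k x‖ ∂μ) ≤ aco γ k * (|u| * M) ^ k := by
    intro k
    have hb : ∀ᵐ x ∂μ, ‖F k x‖ ≤ aco γ k * (|u| * M) ^ k := by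
      filter_upwards [hae] with x hx
      have hxM : |x| ≤ M := abs_le.mpr ⟨hx.1, hx.2⟩
      have : ‖F k x‖ = aco γ k * (|u| * |x|) ^ k := by
        rw [hF]
        simp [norm_mul, norm_pow, abs_of_pos (aco_pos hγ k), Complex.norm_I, mul_pow]
        ring
      rw [this]
      gcongr
      exact (aco_pos hγ k).le
    calc (∫ x, ‖F k x‖ ∂μ) ≤ ∫ _, aco γ k * (|u| * M) ^ k ∂μ :=
          integral_mono_ae (hint k).norm (integrable_const _) hb
      _ = aco γ k * (|u| * M) ^ k := by simp
  have hsum_norm : Summable fun k => ∫ x, ‖F k x‖ ∂μ := by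
    refine Summable.of_nonneg_of_le
      (fun k => integral_nonneg fun x => norm_nonneg _) hnorm_le ?_
    exact summable_aco hγ (by positivity) hu
  have main := hasSum_integral_of_summable_integral_norm hint hsum_norm
  have hpt : ∀ᵐ x ∂μ, (∑' k, F k x) = (1 - ((u * x : ℝ) : ℂ) * Complex.I) ^ (-(γ : ℂ)) := by
    filter_upwards [hae] with x hx
    have hxM : |x| ≤ M := abs_le.mpr ⟨hx.1, hx.2⟩
    have hz : ‖((u * x : ℝ) : ℂ) * Complex.I‖ < 1 := by
      have : ‖((u * x : ℝ) : ℂ) * Complex.I‖ = |u| * |x| := by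
        simp [norm_mul, Complex.norm_I, abs_mul]
      rw [this]
      calc |u| * |x| ≤ |u| * M := mul_le_mul_of_nonneg_left hxM (abs_nonneg u)
        _ < 1 := hu
    have hbs := binomial_hasSum hγ hz
    rw [← hbs.tsum_eq]
    refine tsum_congr fun k => ?_
    rw [hF]
    push_cast
    ring
  have h2 : (∫ x, (∑' k, F k x) ∂μ) = stieltjesR γ μ u := by
    rw [stieltjesR]
    exact integral_congr_ae hpt
  rw [h2] at main
  refine main.congr_fun fun k => ?_
  rw [hF]
  simp only [aco]
  rw [integral_const_mul]
  congr 1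
  rw [show (fun x : ℝ => ((x : ℂ)) ^ k) = fun x : ℝ => (((x ^ k : ℝ)) : ℂ) from
    funext fun x => by push_cast; ring]
  exact integral_ofReal.symm
end

section
/- For every real n > 0 the generalized convolution ⋆_n is not associative: with δ_a denoting the Dirac measure at a, one has (δ₁ ⋆_n δ₀) ⋆_n δ₀ ≠ δ₁ ⋆_n (δ₀ ⋆_n δ₀). Concretely, if X₁ and X₂ are independent random variables each with the Beta(n,n) distribution on (0,1), then the law of the product X₁·X₂ is different from the law of X₁ (indeed E[X₁X₂] = 1/4 ≠ 1/2 = E[X₁]). -/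
open MeasureTheory ProbabilityTheory Filter Topology Set

/-- The generalized convolution `μ₁ ⋆_n μ₂`: the law of `U·X + V·(1-X)` where `U, V, X`
are independent with laws `μ₁`, `μ₂` and Beta(n,n) respectively. -/
noncomputable def genConv (n : ℝ) (μ₁ μ₂ : Measure ℝ) : Measure ℝ :=
  Measure.map (fun p : ℝ × ℝ × ℝ => p.1 * p.2.2 + p.2.1 * (1 - p.2.2))
    (μ₁.prod (μ₂.prod (_root_.betaMeasure n n)))

/-! ### Auxiliary lemmas -/

open scoped NNReal ENNReal

lemma betaFun_pos {a b : ℝ} (ha : 0 < a) (hb : 0 < b) : 0 < betaFun a b := by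
  have h1 := Real.Gamma_pos_of_pos ha
  have h2 := Real.Gamma_pos_of_pos hb
  have h3 := Real.Gamma_pos_of_pos (by linarith : 0 < a + b)
  exact div_pos (mul_pos h1 h2) h3

lemma beta_cast {a b x : ℝ} (hx : 0 ≤ x) (hx' : x ≤ 1) :
    ((x : ℂ) ^ ((a : ℂ) - 1) * (1 - (x : ℂ)) ^ ((b : ℂ) - 1))
      = ((x ^ (a - 1) * (1 - x) ^ (b - 1) : ℝ) : ℂ) := by
  rw [Complex.ofReal_mul, Complex.ofReal_cpow hx,
    Complex.ofReal_cpow (by linarith : (0:ℝ) ≤ 1 - x)]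
  push_cast
  ring

lemma real_betaIntegral {a b : ℝ} (ha : 0 < a) (hb : 0 < b) :
    ∫ x in (0:ℝ)..1, x ^ (a - 1) * (1 - x) ^ (b - 1) = betaFun a b := by
  have h := Complex.Gamma_mul_Gamma_eq_betaIntegral (s := a) (t := b) (by simpa) (by simpa)
  have hG : (0:ℝ) < Real.Gamma (a + b) := Real.Gamma_pos_of_pos (by linarith)
  have hint : Complex.betaIntegral a b
      = ((∫ x in (0:ℝ)..1, x ^ (a - 1) * (1 - x) ^ (b - 1) : ℝ) : ℂ) := by
    rw [Complex.betaIntegral, ← intervalIntegral.integral_ofReal]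
    apply intervalIntegral.integral_congr
    intro x hx
    rw [Set.uIcc_of_le (by norm_num : (0:ℝ) ≤ 1)] at hx
    exact beta_cast hx.1 hx.2
  rw [show ((a:ℂ) + b) = ((a + b : ℝ) : ℂ) by push_cast; ring, Complex.Gamma_ofReal,
    Complex.Gamma_ofReal, Complex.Gamma_ofReal, hint] at h
  have h' : Real.Gamma a * Real.Gamma b
      = Real.Gamma (a + b) * ∫ x in (0:ℝ)..1, x ^ (a - 1) * (1 - x) ^ (b - 1) := by
    exact_mod_cast h
  rw [betaFun, eq_div_iff hG.ne', mul_comm]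
  exact h'.symm

lemma beta_integrableOn {a b : ℝ} (ha : 0 < a) (hb : 0 < b) :
    IntegrableOn (fun x : ℝ => x ^ (a - 1) * (1 - x) ^ (b - 1)) (Set.Ioc 0 1) := by
  have h := (Complex.betaIntegral_convergent (u := a) (v := b) (by simpa) (by simpa)).1
  have h2 := h.re
  apply h2.congr
  rw [Filter.EventuallyEq, ae_restrict_iff' measurableSet_Ioc]
  filter_upwards with x hx
  simp [beta_cast hx.1.le hx.2]

lemma beta_setIntegral {a b : ℝ} (ha : 0 < a) (hb : 0 < b) :
    ∫ x in Ioo (0:ℝ) 1, x ^ (a - 1) * (1 - x) ^ (b - 1) = betaFun a b := by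
  rw [← integral_Ioc_eq_integral_Ioo, ← intervalIntegral.integral_of_le (by norm_num : (0:ℝ) ≤ 1)]
  exact real_betaIntegral ha hb

lemma betaDensity_eq (a b : ℝ) :
    (fun x => if x ∈ Set.Ioo (0:ℝ) 1 then x ^ (a - 1) * (1 - x) ^ (b - 1) / betaFun a b else 0)
      = (Set.Ioo (0:ℝ) 1).indicator
          (fun x => x ^ (a - 1) * (1 - x) ^ (b - 1) / betaFun a b) := by
  funext x; simp [Set.indicator_apply]

lemma betaDensity_integrable {a b : ℝ} (ha : 0 < a) (hb : 0 < b) :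
    Integrable ((Set.Ioo (0:ℝ) 1).indicator
      (fun x => x ^ (a - 1) * (1 - x) ^ (b - 1) / betaFun a b)) := by
  exact MeasureTheory.IntegrableOn.integrable_indicator
    (((beta_integrableOn ha hb).mono_set Set.Ioo_subset_Ioc_self).div_const _)
    measurableSet_Ioo

lemma betaDensity_nonneg {a b : ℝ} (ha : 0 < a) (hb : 0 < b) (x : ℝ) :
    0 ≤ (if x ∈ Set.Ioo (0:ℝ) 1 then
      x ^ (a - 1) * (1 - x) ^ (b - 1) / betaFun a b else 0) := by
  split_ifs with h
  · exact div_nonneg (mul_nonneg (Real.rpow_nonneg h.1.le _)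
      (Real.rpow_nonneg (by linarith [h.2]) _)) (betaFun_pos ha hb).le
  · exact le_refl 0

lemma betaMeasure_isProb {a b : ℝ} (ha : 0 < a) (hb : 0 < b) :
    IsProbabilityMeasure (_root_.betaMeasure a b) := by
  constructor
  rw [_root_.betaMeasure, withDensity_apply _ MeasurableSet.univ, Measure.restrict_univ,
    ← ofReal_integral_eq_lintegral_ofReal
      (by rw [betaDensity_eq]; exact betaDensity_integrable ha hb)
      (Filter.Eventually.of_forall (betaDensity_nonneg ha hb))]
  rw [betaDensity_eq, integral_indicator measurableSet_Ioo, integral_div,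
    beta_setIntegral ha hb, div_self (betaFun_pos ha hb).ne']
  exact ENNReal.ofReal_one

lemma betaFun_ratio {n : ℝ} (hn : 0 < n) : betaFun (n + 1) n / betaFun n n = 1 / 2 := by
  have h1 := Real.Gamma_pos_of_pos hn
  have h2 := Real.Gamma_pos_of_pos (by linarith : (0:ℝ) < n + n)
  rw [betaFun, betaFun, Real.Gamma_add_one hn.ne',
    show n + 1 + n = (n + n) + 1 by ring, Real.Gamma_add_one (by linarith : n + n ≠ 0)]
  field_simp
  ring

lemma betaMean_integral {n : ℝ} (hn : 0 < n) :
    ∫ x in Ioo (0:ℝ) 1, (x ^ (n - 1) * (1 - x) ^ (n - 1) / betaFun n n) * x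
      = betaFun (n + 1) n / betaFun n n := by
  have heq : EqOn (fun x : ℝ => (x ^ (n - 1) * (1 - x) ^ (n - 1) / betaFun n n) * x)
      (fun x : ℝ => x ^ (n + 1 - 1) * (1 - x) ^ (n - 1) / betaFun n n) (Ioo 0 1) := by
    intro x hx
    have hx1 : x ^ (n - 1) * x = x ^ (n + 1 - 1) := by
      rw [show n + 1 - 1 = (n - 1) + 1 by ring, Real.rpow_add hx.1, Real.rpow_one]
    simp only []
    rw [div_mul_eq_mul_div, mul_right_comm, hx1]
  rw [setIntegral_congr_fun measurableSet_Ioo heq, integral_div,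
    beta_setIntegral (by linarith : (0:ℝ) < n + 1) hn]

lemma betaMeasure_mean {n : ℝ} (hn : 0 < n) :
    ∫ x, x ∂(_root_.betaMeasure n n) = 1 / 2 := by
  have hfm : Measurable (fun x : ℝ => if x ∈ Set.Ioo (0:ℝ) 1 then
      x ^ (n - 1) * (1 - x) ^ (n - 1) / betaFun n n else 0) := by
    apply Measurable.ite measurableSet_Ioo _ measurable_const
    fun_prop
  have hβ : _root_.betaMeasure n n = MeasureTheory.volume.withDensity
      (fun x => (((if x ∈ Set.Ioo (0:ℝ) 1 then
        x ^ (n - 1) * (1 - x) ^ (n - 1) / betaFun n n else 0).toNNReal : NNReal) : ENNReal)) := rfl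
  rw [hβ, integral_withDensity_eq_integral_smul
    (f := fun x : ℝ => (if x ∈ Set.Ioo (0:ℝ) 1 then
      x ^ (n - 1) * (1 - x) ^ (n - 1) / betaFun n n else 0).toNNReal)
    hfm.real_toNNReal (fun x : ℝ => x)]
  have hsm : (fun x : ℝ => ((if x ∈ Set.Ioo (0:ℝ) 1 then
        x ^ (n - 1) * (1 - x) ^ (n - 1) / betaFun n n else 0).toNNReal) • x)
      = (Set.Ioo (0:ℝ) 1).indicator
        (fun x => (x ^ (n - 1) * (1 - x) ^ (n - 1) / betaFun n n) * x) := by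
    funext x
    rw [NNReal.smul_def, Real.coe_toNNReal _ (betaDensity_nonneg hn hn x)]
    simp [Set.indicator_apply, ite_mul]
  rw [hsm, integral_indicator measurableSet_Ioo, betaMean_integral hn, betaFun_ratio hn]

/-- For every `n > 0` the generalized convolution `⋆_n` is not associative:
`(δ₁ ⋆_n δ₀) ⋆_n δ₀ ≠ δ₁ ⋆_n (δ₀ ⋆_n δ₀)`. Concretely, if `X₁, X₂` are independent
Beta(n,n) random variables, the law of `X₁·X₂` differs from the law of `X₁`, with
`E[X₁X₂] = 1/4 ≠ 1/2 = E[X₁]`. -/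
theorem genConv_not_associative (n : ℝ) (hn : 0 < n)
    {Ω : Type*} [MeasureSpace Ω] [IsProbabilityMeasure (ℙ : Measure Ω)]
    (X₁ X₂ : Ω → ℝ) (hX₁ : Measurable X₁) (hX₂ : Measurable X₂)
    (hIndep : IndepFun X₁ X₂ ℙ)
    (hX₁law : Measure.map X₁ ℙ = _root_.betaMeasure n n)
    (hX₂law : Measure.map X₂ ℙ = _root_.betaMeasure n n) :
    genConv n (genConv n (Measure.dirac 1) (Measure.dirac 0)) (Measure.dirac 0) ≠
        genConv n (Measure.dirac 1) (genConv n (Measure.dirac 0) (Measure.dirac 0)) ∧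
      Measure.map (fun ω => X₁ ω * X₂ ω) ℙ ≠ Measure.map X₁ ℙ ∧
      (∫ ω, X₁ ω * X₂ ω ∂ℙ) = 1 / 4 ∧ (∫ ω, X₁ ω ∂ℙ) = 1 / 2 := by
  haveI hprob : IsProbabilityMeasure (_root_.betaMeasure n n) := betaMeasure_isProb hn hn
  -- means
  have h4 : (∫ ω, X₁ ω ∂ℙ) = 1 / 2 := by
    have h := integral_map (μ := ℙ) hX₁.aemeasurable
      (f := fun x : ℝ => x) aestronglyMeasurable_id
    rw [hX₁law] at h
    rw [← h]
    exact betaMeasure_mean hn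
  have h4' : (∫ ω, X₂ ω ∂ℙ) = 1 / 2 := by
    have h := integral_map (μ := ℙ) hX₂.aemeasurable
      (f := fun x : ℝ => x) aestronglyMeasurable_id
    rw [hX₂law] at h
    rw [← h]
    exact betaMeasure_mean hn
  have h3 : (∫ ω, X₁ ω * X₂ ω ∂ℙ) = 1 / 4 := by
    have h := hIndep.integral_mul_eq_mul_integral hX₁.aestronglyMeasurable hX₂.aestronglyMeasurable
    have he : (fun ω => X₁ ω * X₂ ω) = X₁ * X₂ := rfl
    rw [show (∫ ω, X₁ ω * X₂ ω ∂ℙ) = ∫ ω, (X₁ * X₂) ω ∂ℙ from rfl, h, h4, h4']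
    norm_num
  -- the laws differ
  have hne : Measure.map (fun ω => X₁ ω * X₂ ω) ℙ ≠ Measure.map X₁ ℙ := by
    intro h
    have e1 : ∫ x, x ∂(Measure.map (fun ω => X₁ ω * X₂ ω) ℙ) = 1 / 4 := by
      rw [integral_map (μ := ℙ) (show Measurable (fun ω => X₁ ω * X₂ ω) from hX₁.mul hX₂).aemeasurable
        (f := fun x : ℝ => x) aestronglyMeasurable_id]
      exact h3
    have e2 : ∫ x, x ∂(Measure.map X₁ ℙ) = 1 / 2 := by
      rw [integral_map (μ := ℙ) hX₁.aemeasurable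
        (f := fun x : ℝ => x) aestronglyMeasurable_id]
      exact h4
    rw [h, e2] at e1
    norm_num at e1
  -- genConv computations
  have hF : Measurable (fun p : ℝ × ℝ × ℝ => p.1 * p.2.2 + p.2.1 * (1 - p.2.2)) := by fun_prop
  have hd0 : (Measure.dirac (0:ℝ)).prod (_root_.betaMeasure n n)
      = (_root_.betaMeasure n n).map (Prod.mk 0) := Measure.dirac_prod _
  haveI : IsProbabilityMeasure ((_root_.betaMeasure n n).map (Prod.mk (0:ℝ))) :=
    Measure.isProbabilityMeasure_map measurable_prodMk_left.aemeasurable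
  have key1 : genConv n (Measure.dirac 1) (Measure.dirac 0) = _root_.betaMeasure n n := by
    rw [genConv, hd0, Measure.dirac_prod, Measure.map_map hF measurable_prodMk_left,
      Measure.map_map (hF.comp measurable_prodMk_left) measurable_prodMk_left]
    have : (((fun p : ℝ × ℝ × ℝ => p.1 * p.2.2 + p.2.1 * (1 - p.2.2)) ∘ Prod.mk 1)
        ∘ Prod.mk 0 : ℝ → ℝ) = id := by
      funext x; simp [Function.comp]
    rw [this, Measure.map_id]
  have key0 : genConv n (Measure.dirac 0) (Measure.dirac 0) = Measure.dirac 0 := by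
    rw [genConv, hd0, Measure.dirac_prod, Measure.map_map hF measurable_prodMk_left,
      Measure.map_map (hF.comp measurable_prodMk_left) measurable_prodMk_left]
    have : (((fun p : ℝ × ℝ × ℝ => p.1 * p.2.2 + p.2.1 * (1 - p.2.2)) ∘ Prod.mk 0)
        ∘ Prod.mk 0 : ℝ → ℝ) = fun _ => (0:ℝ) := by
      funext x; simp [Function.comp]
    rw [this, Measure.map_const, measure_univ, one_smul]
  have key2 : genConv n (_root_.betaMeasure n n) (Measure.dirac 0)
      = Measure.map (fun p : ℝ × ℝ => p.1 * p.2) ((_root_.betaMeasure n n).prod (_root_.betaMeasure n n)) := by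
    rw [genConv, hd0]
    have hp : ((_root_.betaMeasure n n).map id).prod
          ((_root_.betaMeasure n n).map (Prod.mk (0:ℝ) : ℝ → ℝ × ℝ))
        = ((_root_.betaMeasure n n).prod (_root_.betaMeasure n n)).map
          (Prod.map id (Prod.mk (0:ℝ) : ℝ → ℝ × ℝ)) :=
      Measure.map_prod_map _ _ measurable_id measurable_prodMk_left
    rw [Measure.map_id] at hp
    conv_lhs => rw [hp]
    rw [Measure.map_map hF (measurable_id.prodMap measurable_prodMk_left)]
    congr 1
    funext p
    simp [Function.comp, Prod.map]
  have keyprod : Measure.map (fun ω => (X₁ ω, X₂ ω)) ℙ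
      = (_root_.betaMeasure n n).prod (_root_.betaMeasure n n) := by
    have h := (indepFun_iff_map_prod_eq_prod_map_map hX₁.aemeasurable hX₂.aemeasurable).mp hIndep
    rw [hX₁law, hX₂law] at h
    exact h
  have keymul : Measure.map (fun ω => X₁ ω * X₂ ω) ℙ
      = Measure.map (fun p : ℝ × ℝ => p.1 * p.2)
        ((_root_.betaMeasure n n).prod (_root_.betaMeasure n n)) := by
    rw [← keyprod, Measure.map_map (by fun_prop) (hX₁.prodMk hX₂)]
    rfl
  refine ⟨?_, hne, h3, h4⟩
  have hLHS : genConv n (genConv n (Measure.dirac 1) (Measure.dirac 0)) (Measure.dirac 0)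
      = Measure.map (fun ω => X₁ ω * X₂ ω) ℙ := by
    rw [key1, key2, keymul]
  have hRHS : genConv n (Measure.dirac 1) (genConv n (Measure.dirac 0) (Measure.dirac 0))
      = Measure.map X₁ ℙ := by
    rw [key0, key1, hX₁law]
  rw [hLHS, hRHS]
  exact hne
end
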